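/- arXiv:2411.06002 — 12 statements merged into one kernel-verified Lean document; each statement's English description precedes it below -/
import Mathlib

section
/- Let λ ≥ 1 and γ ≥ 2 be finite cardinals (natural numbers) and let κ ≥ 1 be a cardinal. The (λ,κ,γ)-hat game is losing if and only if κ ≥ λ·(γ−1)+1. -/
open Cardinal Set

universe u v

/-- `f` depends on only finitely many coordinates of its argument; this is exactly continuity
with respect to the product topology on `ι → C`, where `C` and `X` carry the discrete topology. -/
def FinDep {ι : Type v} {C : Type u} {X : Type*} (f : (ι → C) → X) : Prop :=
  ∀ h : ι → C, ∃ F : Finset ι, ∀ h' : ι → C, (∀ i ∈ F, h' i = h i) → f h' = f h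

/-- A strategy in the hat game with logicians `L`, colours `C` and `< γ` many guesses:
each logician `a : L` produces a set of fewer than `γ` colours as guesses, where the guess is a
continuous function of the hats of the other logicians (in particular it depends on only finitely
many of the other hats, and never on the logician's own hat). -/
structure HatStrategy (L : Type v) (C : Type u) (γ : Cardinal.{u}) where
  guess : L → (L → C) → Set C
  small : ∀ a h, #(guess a h) < γ
  continuous : ∀ a, FinDep (guess a)
  blind : ∀ a : L, ∀ h h' : L → C, (∀ b, b ≠ a → h b = h' b) → guess a h = guess a h'

/-- A strategy is winning if against every colouring some logician guesses their own colour. -/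
def HatStrategy.IsWinning {L : Type v} {C : Type u} {γ : Cardinal.{u}}
    (S : HatStrategy L C γ) : Prop :=
  ∀ h : L → C, ∃ a, h a ∈ S.guess a h

/-- The hat game with logicians `L`, colours `C` and `< γ` many guesses is winning for the
logicians. -/
def HatWinning (L : Type v) (C : Type u) (γ : Cardinal.{u}) : Prop :=
  ∃ S : HatStrategy L C γ, S.IsWinning

/-- The `(λ, κ, γ)`-hat game is winning: `λ`-many logicians, `κ`-many colours,
`< γ` many guesses. -/
def HatGameWinning (lam κ γ : Cardinal.{u}) : Prop :=
  HatWinning lam.out κ.out γ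

/-- Winning direction: few colours. -/
lemma hat_winning_of_small {L C : Type u} (l g k : ℕ)
    (hg : 2 ≤ g) (hk1 : 1 ≤ k) (hkn : k ≤ l * (g - 1))
    (eL : L ≃ Fin l) (eC : C ≃ Fin k) :
    HatWinning L C (g : Cardinal.{u}) := by
  haveI : NeZero k := ⟨by omega⟩
  haveI : Fintype L := Fintype.ofEquiv _ eL.symm
  set v : C → ZMod k := fun c => ((eC c : ℕ) : ZMod k) with hv
  have vinj : Function.Injective v := by
    intro c c' hcc
    apply eC.injective
    apply Fin.ext
    have := congrArg ZMod.val hcc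
    rwa [ZMod.val_cast_of_lt (eC c).isLt, ZMod.val_cast_of_lt (eC c').isLt] at this
  classical
  set rest : L → (L → C) → ZMod k := fun a h => ∑ b ∈ Finset.univ.erase a, v (h b) with hrest
  set target : L → (L → C) → Finset (ZMod k) := fun a h =>
    (Finset.range (g - 1)).image
      (fun j => ((((eL a : ℕ)) * (g - 1) + j : ℕ) : ZMod k) - rest a h) with htarget
  refine ⟨⟨fun a h => v ⁻¹' ↑(target a h), ?_, ?_, ?_⟩, ?_⟩
  · intro a h
    have h1 := Cardinal.mk_preimage_of_injective_lift v (↑(target a h)) vinj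
    have h2 : (target a h).card ≤ g - 1 :=
      (Finset.card_image_le).trans (by simp)
    have h3 : #(v ⁻¹' ↑(target a h)) ≤ ((g - 1 : ℕ) : Cardinal.{u}) := by
      have hcoe : #(↑(target a h) : Set (ZMod k)) = ((target a h).card : Cardinal.{0}) := by
        simp
      rw [hcoe] at h1
      simp only [Cardinal.lift_natCast, Cardinal.lift_id, Cardinal.lift_uzero] at h1
      calc #(v ⁻¹' ↑(target a h)) ≤ ((target a h).card : Cardinal.{u}) := by exact_mod_cast h1
        _ ≤ ((g - 1 : ℕ) : Cardinal.{u}) := by exact_mod_cast h2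
    refine lt_of_le_of_lt h3 ?_
    exact_mod_cast Nat.sub_lt (by omega) one_pos
  · intro a h
    exact ⟨Finset.univ, fun h' hh' => by
      have : h' = h := funext fun b => hh' b (Finset.mem_univ b)
      rw [this]⟩
  · intro a h h' hagree
    have : rest a h = rest a h' := Finset.sum_congr rfl fun b hb => by
      rw [hagree b (Finset.ne_of_mem_erase hb)]
    simp only [htarget, this]
  · intro h
    set s : ZMod k := ∑ b, v (h b) with hs
    set r := s.val with hrr
    have hr : r < k := ZMod.val_lt s
    have hg1 : 1 ≤ g - 1 := by omega
    have hrn : r < l * (g - 1) := lt_of_lt_of_le hr hkn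
    have hq : r / (g - 1) < l := (Nat.div_lt_iff_lt_mul (by omega)).mpr hrn
    set a := eL.symm ⟨r / (g - 1), hq⟩ with ha
    refine ⟨a, ?_⟩
    have hval : (eL a : ℕ) = r / (g - 1) := by rw [ha, Equiv.apply_symm_apply]
    show h a ∈ v ⁻¹' ↑(target a h)
    simp only [Set.mem_preimage, htarget, Finset.coe_image, Set.mem_image, Finset.coe_range,
      Set.mem_Iio]
    refine ⟨r % (g - 1), Nat.mod_lt _ (by omega), ?_⟩
    have hdm : (eL a : ℕ) * (g - 1) + r % (g - 1) = r := by
      rw [hval, Nat.mul_comm]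
      exact Nat.div_add_mod r (g - 1)
    rw [hdm]
    have h5 : ((r : ℕ) : ZMod k) = s := ZMod.natCast_rightInverse s
    rw [h5]
    have hsum : v (h a) + rest a h = s := by
      simp only [hs, hrest]
      exact Finset.add_sum_erase _ (fun b => v (h b)) (Finset.mem_univ a)
    rw [← hsum]
    ring

/-- Losing direction: many colours. -/
lemma hat_losing {L C : Type u} (l g : ℕ) (hl : 1 ≤ l) (hg : 2 ≤ g)
    (eL : L ≃ Fin l) (ι : Fin (l * (g - 1) + 1) ↪ C) :
    ¬ HatWinning L C (g : Cardinal.{u}) := by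
  classical
  rintro ⟨S, hS⟩
  haveI : Fintype L := Fintype.ofEquiv _ eL.symm
  have hcardL : Fintype.card L = l := by
    rw [Fintype.card_congr eL, Fintype.card_fin]
  set n := l * (g - 1) with hn
  set Bad : L → Finset (L → Fin (n + 1)) := fun a =>
    Finset.univ.filter (fun h => ι (h a) ∈ S.guess a (ι ∘ h)) with hBad
  have hBadcard : ∀ a, (Bad a).card ≤ (g - 1) * (n + 1) ^ (l - 1) := by
    intro a
    have hcardsub : Fintype.card {b : L // b ≠ a} = l - 1 := by
      simp [Fintype.card_subtype_compl, hcardL]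
    have hcardfun : Fintype.card ({b : L // b ≠ a} → Fin (n + 1)) = (n + 1) ^ (l - 1) := by
      rw [Fintype.card_fun, Fintype.card_fin, hcardsub]
    calc (Bad a).card
        ≤ (g - 1) * (Finset.univ : Finset ({b : L // b ≠ a} → Fin (n + 1))).card := by
          apply Finset.card_le_mul_card_image_of_maps_to
            (f := fun h (b : {b : L // b ≠ a}) => h b.1)
            (fun _ _ => Finset.mem_univ _)
          intro rr _
          -- fiber over restriction rr
          set h0 : L → Fin (n + 1) := fun b => if hb : b = a then 0 else rr ⟨b, hb⟩ with hh0
          have hGfin : (S.guess a (ι ∘ h0)).Finite := by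
            have := S.small a (ι ∘ h0)
            exact lt_aleph0_iff_set_finite.mp (this.trans (Cardinal.nat_lt_aleph0 g))
          have hGcard : hGfin.toFinset.card ≤ g - 1 := by
            have h1 : #(S.guess a (ι ∘ h0)) < (g : Cardinal) := S.small a (ι ∘ h0)
            haveI : Finite (S.guess a (ι ∘ h0)) := hGfin.to_subtype
            rw [← Nat.cast_card, Nat.cast_lt] at h1
            rw [← Nat.card_eq_card_finite_toFinset hGfin]
            omega
          have key : ∀ h ∈ (Bad a).filter
              (fun h => (fun (b : {b : L // b ≠ a}) => h b.1) = rr),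
              ι (h a) ∈ hGfin.toFinset := by
            intro h hh
            simp only [Finset.mem_filter, hBad, Finset.mem_univ, true_and] at hh
            obtain ⟨hmem, hrest⟩ := hh
            have hsame : S.guess a (ι ∘ h) = S.guess a (ι ∘ h0) := by
              apply S.blind
              intro b hb
              simp only [Function.comp_apply, hh0]
              rw [dif_neg hb]
              congr 1
              exact congrFun hrest ⟨b, hb⟩
            rw [hGfin.mem_toFinset, ← hsame]
            exact hmem
          calc ((Bad a).filter
              (fun h => (fun (b : {b : L // b ≠ a}) => h b.1) = rr)).card
              ≤ hGfin.toFinset.card := by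
                apply Finset.card_le_card_of_injOn (fun h => ι (h a)) (fun h hh => Finset.mem_coe.mpr (key h (Finset.mem_coe.mp hh)))
                intro h hh h' hh' heq
                simp only [Finset.mem_coe, Finset.mem_filter] at hh hh'
                have hha : h a = h' a := ι.injective heq
                funext b
                by_cases hb : b = a
                · rw [hb]; exact hha
                · exact congrFun (hh.2.trans hh'.2.symm) ⟨b, hb⟩
            _ ≤ g - 1 := hGcard
      _ = (g - 1) * (n + 1) ^ (l - 1) := by rw [Finset.card_univ, hcardfun]
  -- total bad colourings
  set BadAll : Finset (L → Fin (n + 1)) :=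
    Finset.univ.filter (fun h => ∃ a, ι (h a) ∈ S.guess a (ι ∘ h)) with hBadAll
  have hsub : BadAll ⊆ Finset.univ.biUnion Bad := by
    intro h hh
    simp only [hBadAll, Finset.mem_filter, Finset.mem_univ, true_and] at hh
    obtain ⟨a, ha⟩ := hh
    exact Finset.mem_biUnion.mpr ⟨a, Finset.mem_univ a, by
      simp only [hBad, Finset.mem_filter, Finset.mem_univ, true_and]; exact ha⟩
  have hBadAllcard : BadAll.card < Fintype.card (L → Fin (n + 1)) := by
    have h1 : BadAll.card ≤ l * ((g - 1) * (n + 1) ^ (l - 1)) := by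
      calc BadAll.card ≤ (Finset.univ.biUnion Bad).card := Finset.card_le_card hsub
        _ ≤ ∑ a, (Bad a).card := Finset.card_biUnion_le
        _ ≤ ∑ _a : L, (g - 1) * (n + 1) ^ (l - 1) := Finset.sum_le_sum fun a _ => hBadcard a
        _ = l * ((g - 1) * (n + 1) ^ (l - 1)) := by rw [Finset.sum_const, Finset.card_univ,
            hcardL, smul_eq_mul]
    have h2 : Fintype.card (L → Fin (n + 1)) = (n + 1) ^ l := by
      rw [Fintype.card_fun, Fintype.card_fin, hcardL]
    rw [h2]
    have h3 : l * ((g - 1) * (n + 1) ^ (l - 1)) = n * (n + 1) ^ (l - 1) := by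
      rw [hn]; ring
    have h4 : n * (n + 1) ^ (l - 1) < (n + 1) * (n + 1) ^ (l - 1) :=
      Nat.mul_lt_mul_of_pos_right (by omega) (pow_pos (Nat.succ_pos n) _)
    have h5 : (n + 1) * (n + 1) ^ (l - 1) = (n + 1) ^ l := by
      rw [← pow_succ']
      congr 1
      omega
    omega
  obtain ⟨h, hh⟩ : ∃ h : L → Fin (n + 1), h ∉ BadAll := by
    by_contra hcon
    push_neg at hcon
    have : (Finset.univ : Finset (L → Fin (n + 1))).card ≤ BadAll.card :=
      Finset.card_le_card fun x _ => hcon x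
    rw [Finset.card_univ] at this
    omega
  obtain ⟨a, ha⟩ := hS (ι ∘ h)
  exact hh (by
    simp only [hBadAll, Finset.mem_filter, Finset.mem_univ, true_and]
    exact ⟨a, ha⟩)

/-- For finite `λ ≥ 1` and `γ ≥ 2` and `κ ≥ 1`, the `(λ,κ,γ)`-hat game is losing iff
`κ ≥ λ·(γ-1)+1`. -/
theorem stmt0 (l g : ℕ) (hl : 1 ≤ l) (hg : 2 ≤ g) (κ : Cardinal.{u}) (hκ : 1 ≤ κ) :
    ¬ HatGameWinning (l : Cardinal.{u}) κ (g : Cardinal.{u}) ↔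
      ((l * (g - 1) + 1 : ℕ) : Cardinal.{u}) ≤ κ := by
  have hLeq : Nonempty ((l : Cardinal.{u}).out ≃ ULift.{u} (Fin l)) := by
    rw [← Cardinal.eq]
    simp
  obtain ⟨eL0⟩ := hLeq
  have eL : (l : Cardinal.{u}).out ≃ Fin l := eL0.trans Equiv.ulift
  constructor
  · intro hnw
    by_contra hlt
    push_neg at hlt
    have hκa : κ < ℵ₀ := hlt.trans (Cardinal.nat_lt_aleph0 _)
    obtain ⟨k, rfl⟩ := Cardinal.lt_aleph0.mp hκa
    have hk : k < l * (g - 1) + 1 := by exact_mod_cast hlt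
    have hk1 : 1 ≤ k := by exact_mod_cast hκ
    have hCeq : Nonempty (((k : ℕ) : Cardinal.{u}).out ≃ ULift.{u} (Fin k)) := by
      rw [← Cardinal.eq]
      simp
    obtain ⟨eC0⟩ := hCeq
    exact hnw (hat_winning_of_small l g k hg hk1 (by omega) eL (eC0.trans Equiv.ulift))
  · intro hle hw
    have hemb : #(ULift.{u} (Fin (l * (g - 1) + 1))) ≤ #κ.out := by
      simpa using hle.trans_eq (Cardinal.mk_out κ).symm
    obtain ⟨emb⟩ := Cardinal.le_def _ _ |>.mp hemb
    exact hat_losing l g hl hg eL (Equiv.ulift.symm.toEmbedding.trans emb) hw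
end

section
/- Let λ ≥ 1 be a finite cardinal (natural number), let γ be an infinite cardinal and let κ ≥ 1 be a cardinal. The (λ,κ,γ)-hat game is losing if and only if κ ≥ γ^{+(λ−1)}, where γ^{+(λ−1)} denotes the (λ−1)-fold iterated cardinal successor of γ. -/
open Cardinal Set

universe u v

section HatAux

open Order

lemma finDep_of_finite {ι : Type v} [Finite ι] {C : Type u} {X : Type*} (f : (ι → C) → X) :
    FinDep f := by
  cases nonempty_fintype ι
  intro h
  exact ⟨Finset.univ, fun h' H => by
    have : h' = h := funext fun i => H i (Finset.mem_univ i)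
    rw [this]⟩

lemma aleph0_le_iter {γ : Cardinal.{u}} (hγ : ℵ₀ ≤ γ) (n : ℕ) :
    ℵ₀ ≤ (succ : Cardinal.{u} → Cardinal.{u})^[n] γ := by
  induction n with
  | zero => exact hγ
  | succ n ih => rw [Function.iterate_succ_apply']; exact ih.trans (le_succ _)

lemma le_iter_succ (a : Cardinal.{u}) (n : ℕ) :
    a ≤ (succ : Cardinal.{u} → Cardinal.{u})^[n] a := by
  induction n with
  | zero => exact le_rfl
  | succ n ih => rw [Function.iterate_succ_apply']; exact ih.trans (le_succ _)

lemma mk_iUnion_lt_of_finite {ι C : Type u} [Finite ι] {γ : Cardinal.{u}} (hγ : ℵ₀ ≤ γ)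
    (f : ι → Set C) (hf : ∀ i, #(f i) < γ) : #(⋃ i, f i) < γ := by
  refine (Cardinal.mk_iUnion_le f).trans_lt
    (Cardinal.mul_lt_of_lt hγ ((Cardinal.mk_lt_aleph0_iff.mpr ‹_›).trans_le hγ) ?_)
  rcases isEmpty_or_nonempty ι with h | h
  · rw [ciSup_of_empty]
    exact (aleph0_pos.trans_le hγ).trans_le' bot_le |>.trans_le le_rfl |>.trans_le le_rfl
  · obtain ⟨i₀, hi₀⟩ := Finite.exists_max fun i => #(f i)
    exact (ciSup_le' hi₀).trans_lt (hf i₀)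

lemma hat_key : ∀ (n : ℕ) (L C : Type u) (γ : Cardinal.{u}), ℵ₀ ≤ γ →
    #L = ((n + 1 : ℕ) : Cardinal.{u}) →
    (HatWinning L C γ ↔ #C < (succ : Cardinal.{u} → Cardinal.{u})^[n] γ) := by
  intro n
  induction n with
  | zero =>
    intro L C γ hγ hL
    have hL1 : #L = 1 := by rw [hL]; norm_num
    obtain ⟨hsub, hne⟩ := Cardinal.eq_one_iff_unique.mp hL1
    haveI := hsub; haveI := hne
    haveI : Finite L := Finite.of_subsingleton
    obtain ⟨j₀⟩ := hne
    constructor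
    · rintro ⟨S, hS⟩
      by_contra hC
      push_neg at hC
      have hCne : Nonempty C := by
        rw [← Cardinal.mk_ne_zero_iff]
        exact fun h0 => absurd (h0 ▸ hγ.trans hC) (by simp [aleph0_pos.ne'])
      obtain ⟨c₀⟩ := hCne
      set G := S.guess j₀ (fun _ => c₀) with hGdef
      have hGlt : #G < γ := S.small _ _
      have hGne : G ≠ Set.univ := by
        intro hu
        rw [hu, Cardinal.mk_univ] at hGlt
        exact absurd (hC.trans_lt hGlt) (lt_irrefl γ)
      obtain ⟨c, hc⟩ := (Set.ne_univ_iff_exists_notMem G).mp hGne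
      obtain ⟨a, ha⟩ := hS fun _ => c
      have e : S.guess a (fun _ => c) = G := by
        rw [Subsingleton.elim a j₀]
        exact S.blind j₀ _ _ (fun b hb => absurd (Subsingleton.elim b j₀) hb)
      rw [e] at ha
      exact hc ha
    · intro hC
      exact ⟨⟨fun _ _ => univ, fun a h => by rwa [Cardinal.mk_univ],
        fun a => finDep_of_finite _, fun _ _ _ _ => rfl⟩, fun h => ⟨j₀, mem_univ _⟩⟩
  | succ n ih =>
    intro L C γ hγ hL
    haveI hfin : Finite L := by
      rw [← Cardinal.mk_lt_aleph0_iff, hL]; exact Cardinal.nat_lt_aleph0 _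
    cases nonempty_fintype L
    haveI := Classical.decEq L
    have hcard : Fintype.card L = n + 2 := by
      have h0 := Cardinal.mk_fintype L
      rw [h0] at hL
      exact_mod_cast hL
    haveI : Nonempty L := Fintype.card_pos_iff.mp (by omega)
    have hsub : ∀ j : L, #({i : L // i ≠ j}) = ((n + 1 : ℕ) : Cardinal.{u}) := by
      intro j
      have h1 : Fintype.card {i : L // ¬ (i = j)} =
          Fintype.card L - Fintype.card {i : L // i = j} := Fintype.card_subtype_compl _
      rw [Fintype.card_subtype_eq, hcard] at h1
      have h2 : Fintype.card {i : L // i ≠ j} = n + 1 := by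
        simpa [Ne] using h1
      rw [Cardinal.mk_fintype, h2]
    set δ := (succ : Cardinal.{u} → Cardinal.{u})^[n] γ with hδdef
    have hδinf : ℵ₀ ≤ δ := aleph0_le_iter hγ n
    have hiter : (succ : Cardinal.{u} → Cardinal.{u})^[n + 1] γ = succ δ :=
      Function.iterate_succ_apply' _ _ _
    have hiter2 : (succ : Cardinal.{u} → Cardinal.{u})^[n + 1] γ =
        (succ : Cardinal.{u} → Cardinal.{u})^[n] (succ γ) := Function.iterate_succ_apply _ _ _
    obtain ⟨j₀⟩ := (inferInstance : Nonempty L)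
    constructor
    · rintro ⟨S, hS⟩
      by_contra hCbig
      push_neg at hCbig
      -- hCbig : succ^[n+1] γ ≤ #C
      have hγC : γ < #C :=
        (lt_succ γ).trans_le ((le_iter_succ (succ γ) n).trans (hiter2 ▸ hCbig))
      obtain ⟨ι⟩ : Nonempty (γ.out ↪ C) :=
        (Cardinal.le_def _ _).mp (by rw [Cardinal.mk_out]; exact hγC.le)
      haveI : Nonempty γ.out := by
        rw [← Cardinal.mk_ne_zero_iff, Cardinal.mk_out]
        exact (aleph0_pos.trans_le hγ).ne'
      let ext : ({i : L // i ≠ j₀} → C) → C → L → C :=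
        fun g c k => if hk : k = j₀ then c else g ⟨k, hk⟩
      have extblind : ∀ g c c' (b : L), b ≠ j₀ → ext g c b = ext g c' b := by
        intro g c c' b hb
        simp only [ext, dif_neg hb]
      let S' : HatStrategy {i : L // i ≠ j₀} C (succ γ) :=
        { guess := fun a g => ⋃ i : γ.out, S.guess ↑a (ext g (ι i))
          small := fun a g => by
            refine (Cardinal.mk_iUnion_le _).trans_lt ?_
            rw [Order.lt_succ_iff]
            calc #γ.out * ⨆ i, #(S.guess ↑a (ext g (ι i)))
                ≤ γ * γ := by
                  rw [Cardinal.mk_out]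
                  exact mul_le_mul' le_rfl (ciSup_le' fun i => (S.small _ _).le)
              _ = γ := Cardinal.mul_eq_self hγ
          continuous := fun a => finDep_of_finite _
          blind := fun a g g' H => iUnion_congr fun i => S.blind ↑a _ _ (by
            intro b hb
            by_cases hbj : b = j₀
            · subst hbj; simp only [ext, dif_pos]
            · simp only [ext, dif_neg hbj]
              exact H ⟨b, hbj⟩ (fun e => hb (congrArg Subtype.val e)) ) }
      have hnw : ¬ S'.IsWinning := by
        intro hw
        have hlt := (ih {i : L // i ≠ j₀} C (succ γ) (hγ.trans (le_succ γ)) (hsub j₀)).mp ⟨S', hw⟩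
        rw [← hiter2] at hlt
        exact absurd hCbig (not_le.mpr hlt)
      simp only [HatStrategy.IsWinning] at hnw
      push_neg at hnw
      obtain ⟨g, hg⟩ := hnw
      obtain ⟨i₀⟩ := (inferInstance : Nonempty γ.out)
      set G := S.guess j₀ (ext g (ι i₀)) with hGdef
      have hGγ : #G < γ := S.small _ _
      have hex : ∃ i, ι i ∉ G := by
        by_contra hall
        push_neg at hall
        have : γ ≤ #G := by
          rw [← Cardinal.mk_out γ]
          exact Cardinal.mk_le_of_injective
            (f := fun i => (⟨ι i, hall i⟩ : G))
            (fun a b hab => ι.injective (congrArg Subtype.val hab))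
        exact absurd hGγ (not_lt.mpr this)
      obtain ⟨i, hi⟩ := hex
      obtain ⟨a, ha⟩ := hS (ext g (ι i))
      by_cases haj : a = j₀
      · subst haj
        have e1 : ext g (ι i) a = ι i := dif_pos rfl
        have e2 : S.guess a (ext g (ι i)) = G :=
          S.blind a _ _ (fun b hb => extblind g (ι i) (ι i₀) b hb)
        rw [e1, e2] at ha
        exact hi ha
      · have e1 : ext g (ι i) a = g ⟨a, haj⟩ := dif_neg haj
        refine hg ⟨a, haj⟩ ?_
        have hmem : g ⟨a, haj⟩ ∈ S.guess a (ext g (ι i)) := by rw [← e1]; exact ha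
        exact mem_iUnion.mpr ⟨i, hmem⟩
    · intro hC
      rcases lt_or_ge (#C) δ with h1 | h1
      · obtain ⟨T, hT⟩ := (ih {i : L // i ≠ j₀} C γ hγ (hsub j₀)).mpr h1
        refine ⟨⟨fun a h => if ha : a = j₀ then ∅ else T.guess ⟨a, ha⟩ (fun k => h ↑k),
          ?_, fun a => finDep_of_finite _, ?_⟩, ?_⟩
        · intro a h
          by_cases ha : a = j₀
          · simp only [dif_pos ha, Cardinal.mk_emptyCollection]
            exact aleph0_pos.trans_le hγ
          · simp only [dif_neg ha]; exact T.small _ _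
        · intro a h h' H
          by_cases ha : a = j₀
          · simp only [dif_pos ha]
          · simp only [dif_neg ha]
            exact T.blind ⟨a, ha⟩ _ _ (fun b hb => H ↑b (fun e => hb (Subtype.ext e)))
        · intro h
          obtain ⟨a, ha⟩ := hT (fun k => h ↑k)
          refine ⟨↑a, ?_⟩
          simp only [dif_neg a.2]
          rwa [Subtype.coe_eta]
      · classical
        have hCδ : #C = δ := le_antisymm (by rw [hiter] at hC; exact Order.lt_succ_iff.mp hC) h1
        obtain ⟨r, wo, hr⟩ := Cardinal.ord_eq C
        haveI := wo
        set D : C → Set C := fun c => {x : C | r x c ∨ x = c} with hDdef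
        have hseg : ∀ c : C, #(D c) < δ := by
          intro c
          have h2 : #{x : C // r x c} < #C := by
            rw [← Ordinal.card_typein]; exact Cardinal.card_typein_lt (r := r) c hr
          rw [hCδ] at h2
          have h3 : #(D c) ≤ #{x : C // r x c} + 1 := by
            have hss : D c ⊆ {x : C | r x c} ∪ {c} := by
              intro x hx
              rcases hx with hx | rfl
              · exact Or.inl hx
              · exact Or.inr rfl
            refine (Cardinal.mk_le_mk_of_subset hss).trans ?_
            refine (Cardinal.mk_union_le _ _).trans ?_
            rw [Cardinal.mk_singleton]
            exact le_rfl
          have h4 : #{x : C // r x c} + 1 < δ := by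
            rcases lt_or_ge (#{x : C // r x c}) ℵ₀ with hfin2 | hinf2
            · exact (Cardinal.add_lt_aleph0 hfin2 Cardinal.one_lt_aleph0).trans_le hδinf
            · rw [Cardinal.add_one_eq hinf2]; exact h2
          exact h3.trans_lt h4
        have hwin : ∀ (c : C) (j : L),
            ∃ W : HatStrategy {i : L // i ≠ j} ↥(D c) γ, W.IsWinning := by
          intro c j
          exact (ih {i : L // i ≠ j} ↥(D c) γ hγ (hsub j)).mpr (hseg c)
        choose T hT using hwin
        let π : ∀ c : C, C → ↥(D c) := fun c x =>
          if hx : x ∈ D c then ⟨x, hx⟩ else ⟨c, Or.inr rfl⟩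
        refine ⟨⟨fun a h => ⋃ j : {j : L // j ≠ a},
            Subtype.val '' ((T (h ↑j) ↑j).guess ⟨a, fun e => j.2 e.symm⟩
              (fun k => π (h ↑j) (h ↑k))),
          ?_, fun a => finDep_of_finite _, ?_⟩, ?_⟩
        · intro a h
          exact mk_iUnion_lt_of_finite hγ _
            (fun j => Cardinal.mk_image_le.trans_lt ((T (h ↑j) ↑j).small _ _))
        · intro a h h' H
          apply iUnion_congr
          intro j
          have e := H ↑j j.2
          rw [e]
          exact congrArg (Set.image Subtype.val) <| (T (h' ↑j) ↑j).blind ⟨a, fun e => j.2 e.symm⟩ _ _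
            (fun b hb => congrArg (π (h' ↑j)) (H ↑b (fun e2 => hb (Subtype.ext e2))))
        · intro h
          letI lo : LinearOrder C := IsWellOrder.linearOrder r
          obtain ⟨j, hj⟩ := Finite.exists_max h
          have hmem : ∀ i : L, h i ∈ D (h j) := by
            intro i
            rcases lt_or_eq_of_le (hj i) with hlt | heq
            · exact Or.inl hlt
            · exact Or.inr heq
          obtain ⟨a, ha⟩ := hT (h j) j
            (fun k : {i : L // i ≠ j} => (⟨h ↑k, hmem ↑k⟩ : ↥(D (h j))))
          have einput : (fun k : {i : L // i ≠ j} => π (h j) (h ↑k)) =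
              (fun k : {i : L // i ≠ j} => (⟨h ↑k, hmem ↑k⟩ : ↥(D (h j)))) := by
            funext k
            simp only [π]
            exact dif_pos (hmem ↑k)
          refine ⟨↑a, mem_iUnion.mpr ⟨⟨j, Ne.symm a.2⟩, ?_⟩⟩
          rw [einput, Subtype.coe_eta]
          exact ⟨_, ha, rfl⟩

end HatAux

/-- For finite `λ ≥ 1`, infinite `γ` and `κ ≥ 1`, the `(λ,κ,γ)`-hat game is losing iff
`κ ≥ γ⁺⁽λ⁻¹⁾`, the `(λ-1)`-fold iterated cardinal successor of `γ`. -/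
theorem stmt1 (l : ℕ) (hl : 1 ≤ l) (γ κ : Cardinal.{u}) (hγ : ℵ₀ ≤ γ) (hκ : 1 ≤ κ) :
    ¬ HatGameWinning (l : Cardinal.{u}) κ γ ↔ (Order.succ)^[l - 1] γ ≤ κ := by
  obtain ⟨m, rfl⟩ : ∃ m, l = m + 1 := ⟨l - 1, (Nat.succ_pred_eq_of_pos hl).symm⟩
  have hkey := hat_key m (((m + 1 : ℕ) : Cardinal.{u}).out) κ.out γ hγ (Cardinal.mk_out _)
  rw [Cardinal.mk_out] at hkey
  simp only [HatGameWinning, Nat.add_sub_cancel]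
  rw [hkey, not_lt]
end

section
/- Let λ be an infinite cardinal, let γ ≥ 2 be a finite cardinal (natural number), and let κ ≥ 1 be a cardinal. The (λ,κ,γ)-hat game is losing if and only if κ is infinite. -/
open Cardinal Set

universe u v

namespace HatProof

lemma sum_pow_half_lt_one (s : Finset ℕ) : ∑ n ∈ s, ((2:ℚ)⁻¹)^(n+1) < 1 := by
  obtain ⟨m, hm⟩ := s.exists_nat_subset_range
  have key : ∀ m : ℕ, ∑ n ∈ Finset.range m, ((2:ℚ)⁻¹)^(n+1) = 1 - (2⁻¹)^m := by
    intro m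
    induction m with
    | zero => simp
    | succ k ih => rw [Finset.sum_range_succ, ih]; ring
  calc ∑ n ∈ s, ((2:ℚ)⁻¹)^(n+1) ≤ ∑ n ∈ Finset.range m, ((2:ℚ)⁻¹)^(n+1) :=
        Finset.sum_le_sum_of_subset_of_nonneg hm (by intros; positivity)
    _ = 1 - (2⁻¹)^m := key m
    _ < 1 := by
        have : (0:ℚ) < (2⁻¹)^m := by positivity
        linarith

lemma keycount (g : ℕ) (hg : 2 ≤ g) {B : Type*} [DecidableEq B] (e : B → ℕ)
    (he : Function.Injective e) (A W : Finset B) (hAW : A ⊆ W) :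
    (∑ v ∈ A, (g-1) * ∏ w ∈ W.erase v, (g * 2^(e w + 1))) <
      ∏ w ∈ W, (g * 2^(e w + 1)) := by
  have hg0 : (0:ℚ) < (g:ℚ) := by
    have : (2:ℚ) ≤ (g:ℚ) := by exact_mod_cast hg
    linarith
  have hNpos : ∀ w : B, (0:ℚ) < (g:ℚ) * 2^(e w + 1) := fun w => by positivity
  set Nq : B → ℚ := fun w => (g:ℚ) * 2^(e w + 1) with hNq
  have hPpos : (0:ℚ) < ∏ w ∈ W, Nq w := Finset.prod_pos (fun w _ => hNpos w)
  set P : ℚ := ∏ w ∈ W, Nq w with hP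
  have h1 : ∀ v ∈ A, ((g:ℚ)-1) * ∏ w ∈ W.erase v, Nq w ≤ (2⁻¹)^(e v + 1) * P := by
    intro v hv
    set E : ℚ := ∏ w ∈ W.erase v, Nq w with hE
    have hEnn : 0 ≤ E := Finset.prod_nonneg (fun w _ => (hNpos w).le)
    have hPE : E * Nq v = P := Finset.prod_erase_mul _ _ (hAW hv)
    have h2 : ((2:ℚ)⁻¹)^(e v + 1) * (2:ℚ)^(e v + 1) = 1 := by
      rw [← mul_pow]; norm_num
    calc ((g:ℚ)-1) * E ≤ (g:ℚ) * E := by nlinarith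
      _ = (2⁻¹)^(e v + 1) * P := by
          rw [← hPE, hNq]
          linear_combination (-(E*(g:ℚ))) * h2
  have h3 : ∑ v ∈ A, ((g:ℚ)-1) * ∏ w ∈ W.erase v, Nq w < P := by
    calc ∑ v ∈ A, ((g:ℚ)-1) * ∏ w ∈ W.erase v, Nq w
        ≤ ∑ v ∈ A, (2⁻¹)^(e v + 1) * P := Finset.sum_le_sum h1
      _ = (∑ v ∈ A, ((2:ℚ)⁻¹)^(e v + 1)) * P := by rw [Finset.sum_mul]
      _ = (∑ n ∈ A.image e, ((2:ℚ)⁻¹)^(n + 1)) * P := by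
          rw [Finset.sum_image (fun x hx y hy hxy => he hxy)]
      _ < 1 * P := by
          have := sum_pow_half_lt_one (A.image e)
          nlinarith
      _ = P := one_mul P
  rw [← Nat.cast_lt (α := ℚ)]
  push_cast [Nat.cast_sub (show 1 ≤ g by omega)]
  exact h3

lemma cyl_open {B : Type*} {N : B → ℕ} (k₀ : (v : B) → Fin (N v)) (F : Finset B) :
    IsOpen {k : (v : B) → Fin (N v) | ∀ w ∈ F, k w = k₀ w} := by
  have h : {k : (v : B) → Fin (N v) | ∀ w ∈ F, k w = k₀ w}
      = ⋂ w ∈ F, (fun k : (v : B) → Fin (N v) => k w) ⁻¹' {k₀ w} := by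
    ext k; simp
  rw [h]
  exact isOpen_biInter_finset fun w _ =>
    (continuous_apply w).isOpen_preimage _ (isOpen_discrete _)

-- uniform support on the compact box
lemma unif_support {B : Type*} {N : B → ℕ} {X : Type*} (G : (B → ℕ) → X)
    (hFD : FinDep G) :
    ∃ F : Finset B, ∀ k k' : (w : B) → Fin (N w),
      (∀ w ∈ F, k w = k' w) → G (fun v => (k v : ℕ)) = G (fun v => (k' v : ℕ)) := by
  classical
  let ι : ((v : B) → Fin (N v)) → (B → ℕ) := fun k v => (k v : ℕ)
  choose supp hsupp using fun k : (w : B) → Fin (N w) => hFD (ι k)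
  have hcov2 : (univ : Set ((w : B) → Fin (N w))) ⊆
      ⋃ k₀, {k | ∀ w ∈ supp k₀, k w = k₀ w} := fun k _ =>
    mem_iUnion.mpr ⟨k, fun w _ => rfl⟩
  obtain ⟨t, ht⟩ := IsCompact.elim_finite_subcover isCompact_univ _
    (fun k₀ => cyl_open k₀ (supp k₀)) hcov2
  refine ⟨t.biUnion supp, ?_⟩
  intro k k' hkk'
  obtain ⟨k₁, hk₁t, hk₁⟩ : ∃ k₁ ∈ t, ∀ w ∈ supp k₁, k w = k₁ w := by
    have := ht (mem_univ k); simpa using this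
  have h1 : G (ι k) = G (ι k₁) :=
    hsupp k₁ (ι k) (fun i hi => congrArg Fin.val (hk₁ i hi))
  have h2 : G (ι k') = G (ι k₁) := by
    refine hsupp k₁ (ι k') (fun i hi => ?_)
    have hki : k' i = k i := (hkk' i (Finset.mem_biUnion.mpr ⟨k₁, hk₁t, hi⟩)).symm
    show ((k' i : ℕ)) = ((k₁ i : ℕ))
    rw [hki]; exact congrArg Fin.val (hk₁ i hi)
  exact h1.trans h2.symm

theorem countGame {B : Type u} [Countable B] (g : ℕ) (hg : 2 ≤ g)
    (G : B → (B → ℕ) → Set ℕ)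
    (hFD : ∀ v, FinDep (G v))
    (hblind : ∀ (v : B) (k k' : B → ℕ), (∀ w, w ≠ v → k w = k' w) → G v k = G v k')
    (hsmall : ∀ v k, ∃ t : Finset ℕ, G v k = ↑t ∧ t.card < g) :
    ∃ k : B → ℕ, ∀ v, k v ∉ G v k := by
  classical
  obtain ⟨e, he⟩ := (countable_iff_exists_injective B).mp ‹Countable B›
  set N : B → ℕ := fun v => g * 2^(e v + 1) with hN
  have hNpos : ∀ v, 0 < N v :=
    fun v => Nat.mul_pos (by omega) (pow_pos (by omega) _)
  set ι : ((v : B) → Fin (N v)) → (B → ℕ) := fun k v => (k v : ℕ) with hι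
  by_contra hcon
  push_neg at hcon
  -- caught sets
  set Bad : B → Set ((v : B) → Fin (N v)) := fun v => {k | (k v : ℕ) ∈ G v (ι k)}
    with hBad
  have hopen : ∀ v, IsOpen (Bad v) := by
    intro v
    rw [isOpen_iff_forall_mem_open]
    intro k₀ hk₀
    obtain ⟨F, hF⟩ := hFD v (ι k₀)
    refine ⟨{k | ∀ w ∈ insert v F, k w = k₀ w}, ?_, cyl_open k₀ (insert v F), ?_⟩
    · intro k hk
      have hGv : G v (ι k) = G v (ι k₀) := by
        refine hF (ι k) (fun i hi => ?_)
        exact congrArg Fin.val (hk i (Finset.mem_insert_of_mem hi))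
      have hkv : (k v : ℕ) = (k₀ v : ℕ) :=
        congrArg Fin.val (hk v (Finset.mem_insert_self v F))
      show (k v : ℕ) ∈ G v (ι k)
      rw [hGv, hkv]; exact hk₀
    · intro w hw; rfl
  have hcover : (univ : Set ((v : B) → Fin (N v))) ⊆ ⋃ v, Bad v := by
    intro k _
    obtain ⟨v, hv⟩ := hcon (ι k)
    exact mem_iUnion.mpr ⟨v, hv⟩
  obtain ⟨A, hA⟩ := IsCompact.elim_finite_subcover isCompact_univ Bad hopen hcover
  -- uniform supports avoiding v itself
  have hunif : ∀ v : B, ∃ F : Finset B, v ∉ F ∧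
      ∀ k k' : (w : B) → Fin (N w), (∀ w ∈ F, k w = k' w) → G v (ι k) = G v (ι k') := by
    intro v
    obtain ⟨F0, hF0⟩ := unif_support (N := N) (G v) (hFD v)
    refine ⟨F0.erase v, Finset.notMem_erase v F0, ?_⟩
    intro k k' hkk'
    have hupd : G v (ι (Function.update k' v (k v))) = G v (ι k') := by
      apply hblind
      intro w hw
      show ((Function.update k' v (k v) w : ℕ)) = ((k' w : ℕ))
      rw [Function.update_of_ne hw]
    rw [← hupd]
    apply hF0
    intro w hw
    by_cases hwv : w = v
    · subst hwv; simp
    · rw [Function.update_of_ne hwv]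
      exact hkk' w (Finset.mem_erase.mpr ⟨hwv, hw⟩)
  choose Fv hFv1 hFv2 using hunif
  set W : Finset B := A ∪ A.biUnion Fv with hW
  have hAW : A ⊆ W := Finset.subset_union_left
  have hFvW : ∀ v ∈ A, Fv v ⊆ W := fun v hv =>
    (Finset.subset_biUnion_of_mem Fv hv).trans Finset.subset_union_right
  -- finite model
  let kp : ((w : {x // x ∈ W}) → Fin (N w.val)) → ((v : B) → Fin (N v)) :=
    fun p v => if h : v ∈ W then p ⟨v, h⟩ else ⟨0, hNpos v⟩
  set badP : B → Finset ((w : {x // x ∈ W}) → Fin (N w.val)) :=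
    fun v => Finset.univ.filter (fun p => (kp p v : ℕ) ∈ G v (ι (kp p))) with hbadP
  have hcovP : ∀ p, ∃ v ∈ A, p ∈ badP v := by
    intro p
    have h1 := hA (mem_univ (kp p))
    rw [mem_iUnion₂] at h1
    obtain ⟨v, hvA, hv⟩ := h1
    refine ⟨v, hvA, ?_⟩
    rw [hbadP]
    simp only [Finset.mem_filter, Finset.mem_univ, true_and]
    exact hv
  have hbound : ∀ v ∈ A, (badP v).card ≤ (g-1) * ∏ w ∈ W.erase v, N w := by
    intro v hvA
    have hvW : v ∈ W := hAW hvA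
    -- restriction map
    let ρ : ((w : {x // x ∈ W}) → Fin (N w.val)) →
        ((w : {x // x ∈ W.erase v}) → Fin (N w.val)) :=
      fun p w => p ⟨w.val, Finset.mem_of_mem_erase w.2⟩
    have hfiber : ∀ r ∈ (badP v).image ρ,
        ((badP v).filter (fun p => ρ p = r)).card ≤ g - 1 := by
      intro r hr
      obtain ⟨p₀, hp₀, hp₀r⟩ := Finset.mem_image.mp hr
      obtain ⟨t, htG, htc⟩ := hsmall v (ι (kp p₀))
      -- fiber injects into t
      have : ((badP v).filter (fun p => ρ p = r)).card ≤ t.card := by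
        apply Finset.card_le_card_of_injOn (fun p => (kp p v : ℕ))
        · intro p hp
          rw [Finset.mem_coe, Finset.mem_filter] at hp
          obtain ⟨hpbad, hpr⟩ := hp
          rw [hbadP, Finset.mem_filter] at hpbad
          have hG : G v (ι (kp p)) = G v (ι (kp p₀)) := by
            apply hFv2 v
            intro w hw
            have hwW : w ∈ W := hFvW v hvA hw
            have hwv : w ≠ v := fun hc => hFv1 v (hc ▸ hw)
            show kp p w = kp p₀ w
            simp only [kp, dif_pos hwW]
            have e1 : ρ p ⟨w, Finset.mem_erase.mpr ⟨hwv, hwW⟩⟩ =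
                ρ p₀ ⟨w, Finset.mem_erase.mpr ⟨hwv, hwW⟩⟩ := by rw [hpr, hp₀r]
            exact e1
          have := hpbad.2
          rw [hG, htG] at this
          exact this
        · intro p hp q hq hpq
          rw [Finset.mem_coe, Finset.mem_filter] at hp hq
          funext w
          by_cases hwv : w.val = v
          · have hpv : kp p v = p ⟨v, hvW⟩ := by simp only [kp, dif_pos hvW]
            have hqv : kp q v = q ⟨v, hvW⟩ := by simp only [kp, dif_pos hvW]
            have : p ⟨v, hvW⟩ = q ⟨v, hvW⟩ := by
              apply Fin.val_injective
              rw [← congrArg Fin.val hpv, ← congrArg Fin.val hqv]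
              exact hpq
            have hw : w = ⟨v, hvW⟩ := Subtype.ext hwv
            rw [hw]; exact this
          · have := congrFun (hp.2.trans hq.2.symm) ⟨w.val, Finset.mem_erase.mpr ⟨hwv, w.2⟩⟩
            exact this
      omega
    calc (badP v).card ≤ (g-1) * ((badP v).image ρ).card :=
          Finset.card_le_mul_card_image (badP v) (g-1) hfiber
      _ ≤ (g-1) * ∏ w ∈ W.erase v, N w := by
          apply Nat.mul_le_mul_left
          calc ((badP v).image ρ).card ≤ Fintype.card ((w : {x // x ∈ W.erase v}) → Fin (N w.val)) :=
                Finset.card_le_univ _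
            _ = ∏ w ∈ W.erase v, N w := by
                rw [Fintype.card_pi]
                simp only [Fintype.card_fin]
                exact Finset.prod_coe_sort (W.erase v) N
  -- final contradiction
  have hcardP : Fintype.card ((w : {x // x ∈ W}) → Fin (N w.val)) = ∏ w ∈ W, N w := by
    rw [Fintype.card_pi]
    simp only [Fintype.card_fin]
    exact Finset.prod_coe_sort W N
  have hle : Fintype.card ((w : {x // x ∈ W}) → Fin (N w.val)) ≤
      ∑ v ∈ A, (badP v).card := by
    calc Fintype.card ((w : {x // x ∈ W}) → Fin (N w.val))
        = (Finset.univ : Finset ((w : {x // x ∈ W}) → Fin (N w.val))).card := rfl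
      _ ≤ (A.biUnion badP).card := by
          apply Finset.card_le_card
          intro p _
          obtain ⟨v, hvA, hv⟩ := hcovP p
          exact Finset.mem_biUnion.mpr ⟨v, hvA, hv⟩
      _ ≤ ∑ v ∈ A, (badP v).card := Finset.card_biUnion_le
  have hfin : ∑ v ∈ A, (badP v).card ≤ ∑ v ∈ A, (g-1) * ∏ w ∈ W.erase v, N w :=
    Finset.sum_le_sum hbound
  have hkey := keycount g hg e he A W hAW
  rw [hcardP] at hle
  simp only [hN] at hfin hkey hle
  omega

lemma uncountable_infinite {I : Type*} {S : Set I} (h : ¬ S.Countable) : S.Infinite := by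
  intro hfin
  exact h hfin.countable

lemma exists_disjoint_seq {I : Type*} {J : Type*} (S : Set I) (hS : ¬ S.Countable)
    (F : I → Finset J)
    (hB : ∀ a : J, (S ∩ {i | a ∈ F i}).Countable) :
    ∃ f : ℕ → I, Function.Injective f ∧ (∀ n, f n ∈ S) ∧
      ∀ m n, m ≠ n → ∀ x ∈ F (f m), x ∉ F (f n) := by
  classical
  have step : ∀ L : Finset I, ∃ i, i ∈ S ∧ i ∉ L ∧ ∀ j ∈ L, ∀ x ∈ F i, x ∉ F j := by
    intro L
    set bad : Set I := (↑L : Set I) ∪ ⋃ j ∈ L, ⋃ a ∈ F j, (S ∩ {i | a ∈ F i}) with hbad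
    have hbadc : bad.Countable := by
      apply Set.Countable.union L.countable_toSet
      apply Set.Countable.biUnion L.countable_toSet
      intro j _
      exact Set.Countable.biUnion (F j).countable_toSet (fun a _ => hB a)
    have : ¬ (S ⊆ bad) := fun hsub => hS (hbadc.mono hsub)
    obtain ⟨i, hiS, hibad⟩ := Set.not_subset.mp this
    refine ⟨i, hiS, ?_, ?_⟩
    · intro hiL; exact hibad (Or.inl hiL)
    · intro j hj x hxi hxj
      apply hibad
      right
      exact Set.mem_biUnion hj (Set.mem_biUnion hxj ⟨hiS, hxi⟩)
  choose pick hp1 hp2 hp3 using step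
  let g : ℕ → Finset I := fun n => Nat.rec ∅ (fun _ prev => insert (pick prev) prev) n
  have hg : ∀ n, g (n+1) = insert (pick (g n)) (g n) := fun n => rfl
  have hmono : ∀ m n, m ≤ n → g m ⊆ g n := by
    intro m n h
    induction h with
    | refl => exact subset_rfl
    | step h ih => exact ih.trans (by rw [hg]; exact Finset.subset_insert _ _)
  have hfS : ∀ n, pick (g n) ∈ S := fun n => hp1 (g n)
  have hfmem : ∀ n, pick (g n) ∈ g (n+1) := by
    intro n; rw [hg]; exact Finset.mem_insert_self _ _
  have hlt : ∀ m n, m < n → pick (g m) ∈ g n := by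
    intro m n h
    exact hmono (m+1) n h (hfmem m)
  have hdisj : ∀ m n, m < n → ∀ x ∈ F (pick (g m)), x ∉ F (pick (g n)) := by
    intro m n h x hx hx'
    exact hp3 (g n) (pick (g m)) (hlt m n h) x hx' hx
  refine ⟨fun n => pick (g n), ?_, hfS, ?_⟩
  · intro m n hmn
    simp only at hmn
    rcases Nat.lt_trichotomy m n with h | h | h
    · exact absurd (hmn ▸ hlt m n h) (hp2 (g n))
    · exact h
    · exact absurd (hmn ▸ hlt n m h) (hp2 (g m))
  · intro m n hmn x hx hx'
    rcases Nat.lt_trichotomy m n with h | h | h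
    · exact hdisj m n h x hx hx'
    · exact hmn h
    · exact hdisj n m h x hx' hx

lemma delta_system {I : Type*} {J : Type*} :
    ∀ (m : ℕ) (S : Set I) (F : I → Finset J) (val : I → J → ℕ),
      ¬ S.Countable → (∀ i ∈ S, (F i).card ≤ m) →
      ∃ (R : Finset J) (T : Set I), T ⊆ S ∧ T.Infinite ∧
        (∀ i ∈ T, ∀ j ∈ T, i ≠ j → ∀ x ∈ F i, x ∈ F j → x ∈ R) ∧
        (∀ i ∈ T, ∀ j ∈ T, ∀ a ∈ R, val i a = val j a) := by
  classical
  intro m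
  induction m with
  | zero =>
    intro S F val hS hcard
    refine ⟨∅, S, subset_rfl, uncountable_infinite hS, ?_, by simp⟩
    intro i hi j hj hij x hx hx'
    have : F i = ∅ := Finset.card_eq_zero.mp (Nat.le_zero.mp (hcard i hi))
    rw [this] at hx
    exact absurd hx (Finset.notMem_empty x)
  | succ m ih =>
    intro S F val hS hcard
    by_cases hA : ∃ a : J, ¬ (S ∩ {i | a ∈ F i}).Countable
    · obtain ⟨a, ha⟩ := hA
      have hval : ∃ nval : ℕ, ¬ ((S ∩ {i | a ∈ F i}) ∩ {i | val i a = nval}).Countable := by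
        by_contra hc
        push_neg at hc
        apply ha
        have hun : (S ∩ {i | a ∈ F i}) =
            ⋃ n : ℕ, ((S ∩ {i | a ∈ F i}) ∩ {i | val i a = n}) := by
          ext i
          simp only [Set.mem_iUnion, Set.mem_inter_iff, Set.mem_setOf_eq]
          constructor
          · intro h; exact ⟨val i a, h, rfl⟩
          · rintro ⟨n, h, _⟩; exact h
        rw [hun]
        exact Set.countable_iUnion hc
      obtain ⟨nval, hnval⟩ := hval
      set S' := (S ∩ {i | a ∈ F i}) ∩ {i | val i a = nval} with hS'
      have hcard' : ∀ i ∈ S', ((F i).erase a).card ≤ m := by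
        intro i hi
        have h1 : (F i).card ≤ m + 1 := hcard i hi.1.1
        have h2 : a ∈ F i := hi.1.2
        rw [Finset.card_erase_of_mem h2]
        omega
      obtain ⟨R', T, hTS', hTinf, hTsun, hTval⟩ := ih S' (fun i => (F i).erase a) val hnval hcard'
      refine ⟨insert a R', T, fun i hi => (hTS' hi).1.1, hTinf, ?_, ?_⟩
      · intro i hi j hj hij x hxi hxj
        by_cases hxa : x = a
        · exact hxa ▸ Finset.mem_insert_self a R'
        · exact Finset.mem_insert_of_mem (hTsun i hi j hj hij x
            (Finset.mem_erase.mpr ⟨hxa, hxi⟩) (Finset.mem_erase.mpr ⟨hxa, hxj⟩))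
      · intro i hi j hj b hb
        rcases Finset.mem_insert.mp hb with hb | hb
        · subst hb
          have h1 : val i b = nval := (hTS' hi).2
          have h2 : val j b = nval := (hTS' hj).2
          rw [h1, h2]
        · exact hTval i hi j hj b hb
    · push_neg at hA
      obtain ⟨f, hfInj, hfS, hfdisj⟩ := exists_disjoint_seq S hS F hA
      refine ⟨∅, Set.range f, ?_, ?_, ?_, by simp⟩
      · rintro _ ⟨n, rfl⟩; exact hfS n
      · exact Set.infinite_range_of_injective hfInj
      · rintro _ ⟨mm, rfl⟩ _ ⟨nn, rfl⟩ hne x hx hx'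
        have hmn : mm ≠ nn := fun hc => hne (by rw [hc])
        exact absurd hx' (hfdisj mm nn hmn x hx)

def HatRel {ι : Type v} {X : Type*} [DecidableEq ι] (f : (ι → ℕ) → X) : Set ι :=
  {i | ∃ h n, f (Function.update h i n) ≠ f h}

lemma not_rel {ι : Type v} {X : Type*} [DecidableEq ι] {f : (ι → ℕ) → X} {i : ι} (hi : i ∉ HatRel f) :
    ∀ h n, f (Function.update h i n) = f h := by
  intro h n
  by_contra hc
  exact hi ⟨h, n, hc⟩

lemma determined_by_rel {ι : Type v} {X : Type*} [DecidableEq ι] {f : (ι → ℕ) → X} (hFD : FinDep f)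
    (h h' : ι → ℕ) (hagree : ∀ i ∈ HatRel f, h i = h' i) : f h = f h' := by
  obtain ⟨F, hF⟩ := hFD h'
  have key : ∀ (F' : Finset ι), ∀ k l : ι → ℕ,
      (∀ i, k i ≠ l i → i ∈ F' ∧ i ∉ HatRel f) → f k = f l := by
    intro F'
    induction F' using Finset.induction with
    | empty =>
      intro k l hkl
      have : k = l := by
        funext i
        by_contra hc
        exact absurd (hkl i hc).1 (Finset.notMem_empty i)
      rw [this]
    | @insert a F' ha ih =>
      intro k l hkl
      have h1 : f k = f (Function.update l a (k a)) := by
        apply ih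
        intro i hi
        by_cases hia : i = a
        · subst hia
          rw [Function.update_self] at hi
          exact absurd rfl hi
        · rw [Function.update_of_ne hia] at hi
          obtain ⟨hm, hr⟩ := hkl i hi
          exact ⟨Finset.mem_of_mem_insert_of_ne hm hia, hr⟩
      rw [h1]
      by_cases hka : k a = l a
      · rw [hka, Function.update_eq_self]
      · exact not_rel (hkl a hka).2 l (k a)
  have h2 : f h = f (fun i => if i ∈ F then h' i else h i) := by
    apply key F
    intro i hi
    by_cases hiF : i ∈ F
    · simp only [if_pos hiF] at hi
      refine ⟨hiF, fun hrel => hi (hagree i hrel)⟩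
    · simp only [if_neg hiF] at hi
      exact absurd rfl hi
  rw [h2]
  exact hF _ (fun i hi => by simp [if_pos hi])

theorem rel_countable {ι : Type v} {X : Type*} [DecidableEq ι] {f : (ι → ℕ) → X}
    (hFD : FinDep f) : (HatRel f).Countable := by
  classical
  by_contra hunc
  have hdata : ∀ i ∈ HatRel f, ∃ (h : ι → ℕ) (n : ℕ) (F : Finset ι),
      f (Function.update h i n) ≠ f h ∧
      (∀ h', (∀ j ∈ F, h' j = h j) → f h' = f h) ∧
      (∀ h', (∀ j ∈ F, h' j = Function.update h i n j) →
        f h' = f (Function.update h i n)) := by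
    intro i hi
    obtain ⟨h, n, hne⟩ := hi
    obtain ⟨F1, hF1⟩ := hFD h
    obtain ⟨F2, hF2⟩ := hFD (Function.update h i n)
    refine ⟨h, n, F1 ∪ F2, hne, ?_, ?_⟩
    · intro h' hh'; exact hF1 h' (fun j hj => hh' j (Finset.mem_union_left _ hj))
    · intro h' hh'; exact hF2 h' (fun j hj => hh' j (Finset.mem_union_right _ hj))
  choose! H nn FF hne hsup1 hsup2 using hdata
  have hmcard : ∃ m : ℕ, ¬ {i | i ∈ HatRel f ∧ (FF i).card = m}.Countable := by
    by_contra hc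
    push_neg at hc
    apply hunc
    have hun : HatRel f = ⋃ m : ℕ, {i | i ∈ HatRel f ∧ (FF i).card = m} := by
      ext i; simp only [Set.mem_iUnion, Set.mem_setOf_eq]
      exact ⟨fun hi => ⟨(FF i).card, hi, rfl⟩, fun ⟨m, hi, _⟩ => hi⟩
    rw [hun]; exact Set.countable_iUnion hc
  obtain ⟨m, hm⟩ := hmcard
  obtain ⟨R, T, hTS, hTinf, hsun, hval⟩ :=
    delta_system m {i | i ∈ HatRel f ∧ (FF i).card = m} FF H hm
      (fun i hi => le_of_eq hi.2)
  have hT' : (T \ ↑R).Infinite := hTinf.diff R.finite_toSet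
  let ξseq := hT'.natEmbedding
  let ξ : ℕ → ι := fun n => (ξseq n).val
  have hξT : ∀ n, ξ n ∈ T := fun n => ((ξseq n).2).1
  have hξR : ∀ n, ξ n ∉ (↑R : Set ι) := fun n => ((ξseq n).2).2
  have hξinj : Function.Injective ξ := fun a b hab =>
    Function.Embedding.injective ξseq (Subtype.ext hab)
  have hξRel : ∀ n, ξ n ∈ HatRel f := fun n => (hTS (hξT n)).1
  let hstar : ι → ℕ := fun a =>
    if hex : ∃ n, a ∈ FF (ξ n) ∧ a ∉ R then H (ξ hex.choose) a else H (ξ 0) a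
  have hagree : ∀ n, ∀ a ∈ FF (ξ n), hstar a = H (ξ n) a := by
    intro n a ha
    by_cases haR : a ∈ R
    · have hexf : ¬ ∃ k, a ∈ FF (ξ k) ∧ a ∉ R := by
        rintro ⟨k, _, hk⟩; exact hk haR
      simp only [hstar, dif_neg hexf]
      exact hval (ξ 0) (hξT 0) (ξ n) (hξT n) a haR
    · have hex : ∃ k, a ∈ FF (ξ k) ∧ a ∉ R := ⟨n, ha, haR⟩
      simp only [hstar, dif_pos hex]
      obtain ⟨hk1, hk2⟩ := hex.choose_spec
      by_cases hkn : ξ hex.choose = ξ n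
      · rw [hkn]
      · exact absurd (hsun (ξ hex.choose) (hξT hex.choose) (ξ n) (hξT n) hkn a hk1 ha) hk2
  have hfh : ∀ n, f hstar = f (H (ξ n)) :=
    fun n => hsup1 (ξ n) (hξRel n) hstar (fun j hj => hagree n j hj)
  have hfup : ∀ n, f (Function.update hstar (ξ n) (nn (ξ n))) ≠ f hstar := by
    intro n
    have h1 : f (Function.update hstar (ξ n) (nn (ξ n)))
        = f (Function.update (H (ξ n)) (ξ n) (nn (ξ n))) := by
      apply hsup2 (ξ n) (hξRel n)
      intro j hj
      by_cases hjn : j = ξ n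
      · subst hjn; rw [Function.update_self, Function.update_self]
      · rw [Function.update_of_ne hjn, Function.update_of_ne hjn]
        exact hagree n j hj
    rw [h1, hfh n]
    exact hne (ξ n) (hξRel n)
  obtain ⟨G, hG⟩ := hFD hstar
  have hex2 : ∃ n, ξ n ∉ G := by
    by_contra hc
    push_neg at hc
    have hfin : (Set.range ξ).Finite :=
      G.finite_toSet.subset (by rintro _ ⟨n, rfl⟩; exact hc n)
    exact (Set.infinite_range_of_injective hξinj) hfin
  obtain ⟨n, hn⟩ := hex2
  apply hfup n
  apply hG
  intro j hj
  have hjn : j ≠ ξ n := by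
    intro hc
    subst hc
    exact hn hj
  exact Function.update_of_ne hjn _ _

theorem winning_of_finite (L C : Type u) [Infinite L] [Nonempty C] [Finite C]
    (g : ℕ) (hg : 2 ≤ g) : HatWinning L C (g : Cardinal.{u}) := by
  classical
  haveI : Fintype C := Fintype.ofFinite C
  obtain ⟨m, hm⟩ : ∃ m, Fintype.card C = m + 1 :=
    ⟨Fintype.card C - 1, by have := Fintype.card_pos (α := C); omega⟩
  let ψ : C ≃ Fin (m+1) := (Fintype.equivFin C).trans (finCongr hm)
  let ι : Fin (m+1) ↪ L := Fin.valEmbedding.trans (Infinite.natEmbedding L)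
  have hg1 : (1 : Cardinal.{u}) < (g : Cardinal.{u}) := by
    have : ((1:ℕ) : Cardinal.{u}) < ((g:ℕ) : Cardinal.{u}) := Nat.cast_lt.mpr (by omega)
    simpa using this
  have hg0 : (0 : Cardinal.{u}) < (g : Cardinal.{u}) := lt_trans (by norm_num) hg1
  let gs : L → (L → C) → Set C := fun a h =>
    if hex : ∃ i, ι i = a then
      {ψ.symm (hex.choose - ∑ j ∈ Finset.univ.erase hex.choose, ψ (h (ι j)))}
    else ∅
  refine ⟨⟨gs, ?_, ?_, ?_⟩, ?_⟩
  · -- small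
    intro a h
    by_cases hex : ∃ i, ι i = a
    · simp only [gs, dif_pos hex, Cardinal.mk_singleton]
      exact hg1
    · simp only [gs, dif_neg hex, Cardinal.mk_emptyCollection]
      exact hg0
  · -- continuous
    intro a h
    by_cases hex : ∃ i, ι i = a
    · refine ⟨Finset.univ.image (fun j => ι j), ?_⟩
      intro h' hh'
      simp only [gs, dif_pos hex]
      have hsum : ∑ j ∈ Finset.univ.erase hex.choose, ψ (h' (ι j))
          = ∑ j ∈ Finset.univ.erase hex.choose, ψ (h (ι j)) := by
        apply Finset.sum_congr rfl
        intro j _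
        rw [hh' (ι j) (Finset.mem_image.mpr ⟨j, Finset.mem_univ j, rfl⟩)]
      rw [hsum]
    · exact ⟨∅, fun h' _ => by simp only [gs, dif_neg hex]⟩
  · -- blind
    intro a h h' hb
    by_cases hex : ∃ i, ι i = a
    · simp only [gs, dif_pos hex]
      have hsum : ∑ j ∈ Finset.univ.erase hex.choose, ψ (h (ι j))
          = ∑ j ∈ Finset.univ.erase hex.choose, ψ (h' (ι j)) := by
        apply Finset.sum_congr rfl
        intro j hj
        have hja : ι j ≠ a := by
          intro hc
          have hje : j = hex.choose := ι.injective (hc.trans hex.choose_spec.symm)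
          exact (Finset.mem_erase.mp hj).1 hje
        rw [hb (ι j) hja]
      rw [hsum]
    · simp only [gs, dif_neg hex]
  · -- winning
    intro h
    set s : Fin (m+1) := ∑ j : Fin (m+1), ψ (h (ι j)) with hs
    refine ⟨ι s, ?_⟩
    have hex : ∃ i, ι i = ι s := ⟨s, rfl⟩
    show h (ι s) ∈ gs (ι s) h
    simp only [gs, dif_pos hex]
    have hcs : hex.choose = s := ι.injective hex.choose_spec
    rw [Set.mem_singleton_iff, hcs]
    have hsum : ψ (h (ι s)) + ∑ j ∈ Finset.univ.erase s, ψ (h (ι j))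
        = ∑ j : Fin (m+1), ψ (h (ι j)) :=
      Finset.add_sum_erase Finset.univ (fun j => ψ (h (ι j))) (Finset.mem_univ s)
    have : ψ (h (ι s)) = s - ∑ j ∈ Finset.univ.erase s, ψ (h (ι j)) := by
      rw [eq_sub_iff_add_eq, hs]
      exact hsum
    rw [← this, Equiv.symm_apply_apply]

theorem losing_of_infinite {L C : Type u} [Infinite C] (g : ℕ) (hg : 2 ≤ g)
    (S : HatStrategy L C (g : Cardinal.{u})) : ¬ S.IsWinning := by
  classical
  intro hwin
  let c : ℕ ↪ C := Infinite.natEmbedding C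
  let f : L → (L → ℕ) → Set C := fun v h => S.guess v (fun a => c (h a))
  have hfFD : ∀ v, FinDep (f v) := by
    intro v h
    obtain ⟨F, hF⟩ := S.continuous v (fun a => c (h a))
    exact ⟨F, fun h' hh' => hF _ (fun i hi => congrArg c (hh' i hi))⟩
  have hfblind : ∀ (v : L) (h h' : L → ℕ), (∀ b, b ≠ v → h b = h' b) → f v h = f v h' :=
    fun v h h' hb => S.blind v _ _ (fun b hbv => congrArg c (hb b hbv))
  let D : L → Set L := fun v => HatRel (f v)
  have hDc : ∀ v, (D v).Countable := fun v => rel_countable (hfFD v)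
  have hDdet : ∀ (v : L) (h h' : L → ℕ), (∀ i ∈ D v, h i = h' i) → f v h = f v h' :=
    fun v => determined_by_rel (hfFD v)
  -- closure
  let iter : L → ℕ → Set L := fun x n =>
    Nat.rec {x} (fun _ prev => prev ∪ ⋃ v ∈ prev, D v) n
  let cl : L → Set L := fun x => ⋃ n, iter x n
  have hclc : ∀ x, (cl x).Countable := by
    intro x
    apply Set.countable_iUnion
    intro n
    induction n with
    | zero => exact Set.countable_singleton x
    | succ k ih =>
      exact ih.union (Set.Countable.biUnion ih (fun v _ => hDc v))
  have hclx : ∀ x, x ∈ cl x := fun x => Set.mem_iUnion.mpr ⟨0, rfl⟩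
  have hclD : ∀ x v, v ∈ cl x → D v ⊆ cl x := by
    intro x v hv
    obtain ⟨n, hn⟩ := Set.mem_iUnion.mp hv
    intro w hw
    exact Set.mem_iUnion.mpr ⟨n+1, Or.inr (Set.mem_biUnion hn hw)⟩
  -- partial solutions
  let dom : Set (L × ℕ) → Set L := fun Γ => {a | ∃ n, (a, n) ∈ Γ}
  let hof : Set (L × ℕ) → (L → ℕ) := fun Γ a =>
    if h : ∃ n, (a, n) ∈ Γ then h.choose else 0
  let Func : Set (L × ℕ) → Prop := fun Γ => ∀ a b b', (a,b) ∈ Γ → (a,b') ∈ Γ → b = b'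
  have hof_spec : ∀ Γ, Func Γ → ∀ a b, (a,b) ∈ Γ → hof Γ a = b := by
    intro Γ hF a b hab
    have hex : ∃ n, (a,n) ∈ Γ := ⟨b, hab⟩
    simp only [hof, dif_pos hex]
    exact hF a _ _ hex.choose_spec hab
  have hof_none : ∀ Γ a, a ∉ dom Γ → hof Γ a = 0 := by
    intro Γ a ha
    have hnex : ¬ ∃ n, (a, n) ∈ Γ := ha
    simp only [hof, dif_neg hnex]
  let Good : Set (L × ℕ) → Prop := fun Γ =>
    Func Γ ∧ (∀ v ∈ dom Γ, D v ⊆ dom Γ) ∧ (∀ v ∈ dom Γ, c (hof Γ v) ∉ f v (hof Γ))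
  -- Zorn
  have hempty : Good ∅ := by
    refine ⟨fun a b b' hab _ => absurd hab (by simp), ?_, ?_⟩
    · intro v hv; obtain ⟨n, hn⟩ := hv; exact absurd hn (by simp)
    · intro v hv; obtain ⟨n, hn⟩ := hv; exact absurd hn (by simp)
  have hchainub : ∀ ch ⊆ {Γ | Good Γ}, IsChain (fun x1 x2 => x1 ⊆ x2) ch → ch.Nonempty →
      ∃ ub ∈ {Γ | Good Γ}, ∀ s ∈ ch, s ⊆ ub := by
    intro ch hch hchain hne
    refine ⟨⋃₀ ch, ?_, fun s hs => Set.subset_sUnion_of_mem hs⟩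
    have hFunc : Func (⋃₀ ch) := by
      intro a b b' hab hab'
      obtain ⟨Γ₁, hΓ₁, h1⟩ := hab
      obtain ⟨Γ₂, hΓ₂, h2⟩ := hab'
      rcases hchain.total hΓ₁ hΓ₂ with hle | hle
      · exact (hch hΓ₂).1 a b b' (hle h1) h2
      · exact (hch hΓ₁).1 a b b' h1 (hle h2)
    have hagree : ∀ Γ₀ ∈ ch, ∀ a ∈ dom Γ₀, hof (⋃₀ ch) a = hof Γ₀ a := by
      intro Γ₀ hΓ₀ a ha
      obtain ⟨n, hn⟩ := ha
      rw [hof_spec _ hFunc a n ⟨Γ₀, hΓ₀, hn⟩, hof_spec Γ₀ (hch hΓ₀).1 a n hn]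
    have hdom : ∀ a, a ∈ dom (⋃₀ ch) → ∃ Γ₀ ∈ ch, a ∈ dom Γ₀ := by
      rintro a ⟨n, Γ₀, hΓ₀, hn⟩
      exact ⟨Γ₀, hΓ₀, n, hn⟩
    refine ⟨hFunc, ?_, ?_⟩
    · intro v hv w hw
      obtain ⟨Γ₀, hΓ₀, hv₀⟩ := hdom v hv
      obtain ⟨n, hn⟩ := (hch hΓ₀).2.1 v hv₀ hw
      exact ⟨n, Γ₀, hΓ₀, hn⟩
    · intro v hv
      obtain ⟨Γ₀, hΓ₀, hv₀⟩ := hdom v hv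
      have h1 : f v (hof (⋃₀ ch)) = f v (hof Γ₀) := by
        apply hDdet
        intro i hi
        exact hagree Γ₀ hΓ₀ i ((hch hΓ₀).2.1 v hv₀ hi)
      rw [h1, hagree Γ₀ hΓ₀ v hv₀]
      exact (hch hΓ₀).2.2 v hv₀
  obtain ⟨Γ, -, hmax⟩ := zorn_subset_nonempty {Γ | Good Γ} hchainub ∅ hempty
  -- maximal: dom Γ = univ
  have hGood : Good Γ := hmax.prop
  have hdomuniv : dom Γ = Set.univ := by
    by_contra hne
    obtain ⟨x, hx⟩ : ∃ x, x ∉ dom Γ := by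
      by_contra hc
      push_neg at hc
      exact hne (Set.eq_univ_of_forall hc)
    set B : Set L := cl x \ dom Γ with hB
    have hBc : B.Countable := (hclc x).mono Set.diff_subset
    haveI : Countable ↥B := hBc.to_subtype
    let ext : (↥B → ℕ) → (L → ℕ) := fun k a =>
      if h : a ∈ B then k ⟨a, h⟩ else hof Γ a
    let G : ↥B → (↥B → ℕ) → Set ℕ := fun v k => {n | c n ∈ f v.val (ext k)}
    have hGFD : ∀ v, FinDep (G v) := by
      intro v k
      obtain ⟨F, hF⟩ := hfFD v.val (ext k)
      refine ⟨F.preimage Subtype.val (Set.injOn_of_injective Subtype.val_injective),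
        fun k' hk' => ?_⟩
      have : f v.val (ext k') = f v.val (ext k) := by
        apply hF
        intro i hi
        by_cases hiB : i ∈ B
        · simp only [ext, dif_pos hiB]
          exact hk' ⟨i, hiB⟩ (Finset.mem_preimage.mpr hi)
        · simp only [ext, dif_neg hiB]
      simp only [G, this]
    have hGblind : ∀ (v : ↥B) (k k' : ↥B → ℕ), (∀ w, w ≠ v → k w = k' w) → G v k = G v k' := by
      intro v k k' hk
      have hfe : f v.val (ext k) = f v.val (ext k') := by
        apply hfblind
        intro b hbv
        by_cases hbB : b ∈ B
        · simp only [ext, dif_pos hbB]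
          exact hk ⟨b, hbB⟩ (fun hc => hbv (congrArg Subtype.val hc))
        · simp only [ext, dif_neg hbB]
      simp only [G, hfe]
    have hGsmall : ∀ v k, ∃ t : Finset ℕ, G v k = ↑t ∧ t.card < g := by
      intro v k
      have hsm : #(f v.val (ext k)) < (g : Cardinal.{u}) := S.small v.val _
      haveI hsF : Finite (f v.val (ext k)) :=
        Cardinal.lt_aleph0_iff_finite.mp (lt_trans hsm (Cardinal.nat_lt_aleph0 g))
      have hsfinite : (f v.val (ext k)).Finite := Set.toFinite _
      have hGfin : (G v k).Finite := by
        have hinj : Function.Injective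
            (fun x : G v k => (⟨c x.1, x.2⟩ : f v.val (ext k))) := by
          intro x y hxy
          apply Subtype.ext
          exact c.injective (congrArg Subtype.val hxy)
        have : Finite (G v k) := Finite.of_injective _ hinj
        exact Set.toFinite _
      refine ⟨hGfin.toFinset, (hGfin.coe_toFinset).symm, ?_⟩
      have hscard : (hsfinite.toFinset.card : Cardinal.{u}) < (g : Cardinal.{u}) := by
        have hcardeq : (hsfinite.toFinset.card : Cardinal.{u}) = #(f v.val (ext k)) := by
          rw [← Cardinal.mk_coe_finset]
          exact Cardinal.mk_congr (Equiv.setCongr hsfinite.coe_toFinset)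
        rw [hcardeq]
        exact hsm
      have hscard' : hsfinite.toFinset.card < g := by exact_mod_cast hscard
      have hle : hGfin.toFinset.card ≤ hsfinite.toFinset.card := by
        apply Finset.card_le_card_of_injOn (fun n => c n)
        · intro n hn
          rw [Finset.mem_coe, Set.Finite.mem_toFinset] at hn ⊢
          exact hn
        · intro n _ m _ hnm
          exact c.injective hnm
      omega
    obtain ⟨k, hk⟩ := countGame g hg G hGFD hGblind hGsmall
    set E : Set (L × ℕ) := {p | ∃ hb : p.1 ∈ B, p.2 = k ⟨p.1, hb⟩} with hE
    set Γ' : Set (L × ℕ) := Γ ∪ E with hΓ'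
    have hBdom : ∀ a, a ∈ B → a ∉ dom Γ := fun a ha => ha.2
    have hdomΓ' : dom Γ' = dom Γ ∪ B := by
      ext a
      constructor
      · rintro ⟨n, hn | hn⟩
        · exact Or.inl ⟨n, hn⟩
        · exact Or.inr hn.choose
      · rintro (⟨n, hn⟩ | ha)
        · exact ⟨n, Or.inl hn⟩
        · exact ⟨k ⟨a, ha⟩, Or.inr ⟨ha, rfl⟩⟩
    have hFunc' : Func Γ' := by
      rintro a b b' (hab | hab) (hab' | hab')
      · exact hGood.1 a b b' hab hab'
      · exact absurd ⟨b, hab⟩ (hBdom a hab'.choose)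
      · exact absurd ⟨b', hab'⟩ (hBdom a hab.choose)
      · obtain ⟨h1, he1⟩ := hab
        obtain ⟨h2, he2⟩ := hab'
        exact he1.trans he2.symm
    have hext : hof Γ' = ext k := by
      funext a
      by_cases haB : a ∈ B
      · rw [hof_spec Γ' hFunc' a (k ⟨a, haB⟩) (Or.inr ⟨haB, rfl⟩)]
        simp only [ext, dif_pos haB]
      · by_cases haD : a ∈ dom Γ
        · obtain ⟨n, hn⟩ := haD
          rw [hof_spec Γ' hFunc' a n (Or.inl hn)]
          simp only [ext, dif_neg haB]
          rw [hof_spec Γ hGood.1 a n hn]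
        · have hnd : a ∉ dom Γ' := by
            rw [hdomΓ']
            rintro (h | h)
            exacts [haD h, haB h]
          rw [hof_none Γ' a hnd]
          simp only [ext, dif_neg haB]
          rw [hof_none Γ a haD]
    have hGood' : Good Γ' := by
      refine ⟨hFunc', ?_, ?_⟩
      · rw [hdomΓ']
        rintro v (hv | hv)
        · exact (hGood.2.1 v hv).trans Set.subset_union_left
        · intro w hw
          have hwcl : w ∈ cl x := hclD x v hv.1 hw
          by_cases hwD : w ∈ dom Γ
          · exact Or.inl hwD
          · exact Or.inr ⟨hwcl, hwD⟩
      · intro v hv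
        rw [hdomΓ'] at hv
        rcases hv with hv | hv
        · have hvB : v ∉ B := fun h => (hBdom v h) hv
          have h1 : f v (hof Γ') = f v (hof Γ) := by
            apply hDdet
            intro i hi
            have hiD : i ∈ dom Γ := hGood.2.1 v hv hi
            have hiB : i ∉ B := fun h => (hBdom i h) hiD
            rw [hext]
            simp only [ext, dif_neg hiB]
          have h2 : hof Γ' v = hof Γ v := by
            rw [hext]
            simp only [ext, dif_neg hvB]
          rw [h1, h2]
          exact hGood.2.2 v hv
        · rw [hext]
          have h3 : ext k v = k ⟨v, hv⟩ := by simp only [ext, dif_pos hv]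
          rw [h3]
          exact hk ⟨v, hv⟩
    have hsub : Γ ⊆ Γ' := Set.subset_union_left
    have hback : Γ' ⊆ Γ := hmax.2 hGood' hsub
    have hxB : x ∈ B := ⟨hclx x, hx⟩
    have hxmem : (x, k ⟨x, hxB⟩) ∈ Γ' := Or.inr ⟨hxB, rfl⟩
    exact hx ⟨_, hback hxmem⟩
  obtain ⟨a, ha⟩ := hwin (fun b => c (hof Γ b))
  have hav : a ∈ dom Γ := hdomuniv ▸ Set.mem_univ a
  exact hGood.2.2 a hav ha

end HatProof

/-- For infinite `λ`, finite `γ ≥ 2` and `κ ≥ 1`, the `(λ,κ,γ)`-hat game is losing iff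
`κ` is infinite. -/
theorem stmt2 (lam : Cardinal.{u}) (hlam : ℵ₀ ≤ lam) (g : ℕ) (hg : 2 ≤ g)
    (κ : Cardinal.{u}) (hκ : 1 ≤ κ) :
    ¬ HatGameWinning lam κ (g : Cardinal.{u}) ↔ ℵ₀ ≤ κ := by
  constructor
  · intro hnw
    by_contra hfin
    apply hnw
    haveI h1 : Infinite lam.out := by
      rw [Cardinal.infinite_iff, Cardinal.mk_out]; exact hlam
    haveI h2 : Finite κ.out := by
      rw [← Cardinal.lt_aleph0_iff_finite, Cardinal.mk_out]
      exact not_le.mp hfin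
    haveI h3 : Nonempty κ.out := by
      rw [← Cardinal.mk_ne_zero_iff, Cardinal.mk_out]
      exact Cardinal.one_le_iff_ne_zero.mp hκ
    exact HatProof.winning_of_finite lam.out κ.out g hg
  · rintro hinf ⟨S, hS⟩
    haveI : Infinite κ.out := by
      rw [Cardinal.infinite_iff, Cardinal.mk_out]; exact hinf
    exact HatProof.losing_of_infinite g hg S hS
end

section
/- For every nonempty set A there exists a family of functions ⟨g_n : n < ω⟩ with g_n : A^(ω∖{n}) → A such that for every h : ω → A, the set {n < ω : g_n(h restricted to ω∖{n}) ≠ h(n)} is finite; that is, all but finitely many logicians guess their own hat colour correctly when each sees all other hats. -/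
open Set

/-- Gabay–O'Connor: for any nonempty set of colours `A` there are guessing functions
`g n : A^(ω \\ {n}) → A` such that for every colouring `h : ω → A`, all but finitely many
logicians guess their own hat colour correctly. -/
theorem stmt5 (A : Type*) [Nonempty A] :
    ∃ g : (n : ℕ) → ({m : ℕ // m ≠ n} → A) → A,
      ∀ h : ℕ → A, {n : ℕ | g n (fun m => h m.1) ≠ h n}.Finite := by
  classical
  -- equivalence: eventually equal
  let s : Setoid (ℕ → A) :=
    ⟨fun h1 h2 => {n | h1 n ≠ h2 n}.Finite, by
      constructor
      · intro x; simp
      · intro x y hxy; exact hxy.subset (fun n hn => fun e => hn e.symm)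
      · intro x y z hxy hyz
        refine (hxy.union hyz).subset ?_
        intro n hn
        by_cases hx : x n = y n
        · exact Or.inr (fun e => hn (hx.trans e))
        · exact Or.inl hx⟩
  let rep : (ℕ → A) → (ℕ → A) := fun h => (Quotient.mk s h).out
  have hrep : ∀ h, s.r (rep h) h := fun h => Quotient.mk_out (s := s) h
  have hrep_eq : ∀ h h', s.r h h' → rep h = rep h' := by
    intro h h' hhh'
    simp only [rep]
    congr 1
    exact Quotient.sound hhh'
  refine ⟨fun n f => rep (fun m => if hm : m = n then Classical.arbitrary A else f ⟨m, hm⟩) n,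
    fun h => ?_⟩
  have key : ∀ n : ℕ,
      rep (fun m => if hm : m = n then Classical.arbitrary A else h m) = rep h := by
    intro n
    apply hrep_eq
    refine (Set.finite_singleton n).subset ?_
    intro m hm
    simp only [mem_setOf_eq] at hm
    by_contra hmn
    simp only [mem_singleton_iff] at hmn
    exact hm (by simp [hmn])
  have : {n : ℕ | (fun n => rep (fun m => if hm : m = n then Classical.arbitrary A
      else h m) n) n ≠ h n} ⊆ {n | rep h n ≠ h n} := by
    intro n hn
    simp only [mem_setOf_eq] at hn ⊢
    rwa [key n] at hn
  exact ((hrep h).subset this)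
end

section
/- Let κ be a cardinal. The (3,κ,ω)-hat game (three logicians, hat colours in κ, each seeing the two other hats and submitting a finite list of guesses) is winning if and only if κ ≤ ℵ₁. -/
open Cardinal Set

universe u v

def hatClos {C : Type u} (G : C → C → Set C) (X₀ : Set C) : ℕ → Set C
  | 0 => X₀
  | n+1 => hatClos G X₀ n ∪ ⋃ x ∈ hatClos G X₀ n, ⋃ y ∈ hatClos G X₀ n, G x y

lemma hat_closure {C : Type u} (G : C → C → Set C) (hG : ∀ x y, #(G x y) ≤ ℵ₀)
    (X₀ : Set C) :
    ∃ X : Set C, X₀ ⊆ X ∧ (∀ x ∈ X, ∀ y ∈ X, G x y ⊆ X) ∧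
      Cardinal.mk X ≤ max #X₀ ℵ₀ ∧ ∀ Z : Set C, X₀ ⊆ Z → (∀ x y, G x y ⊆ Z) → X ⊆ Z := by
  set μ := max #X₀ ℵ₀ with hμ
  have hℵμ : ℵ₀ ≤ μ := le_max_right _ _
  set cl : ℕ → Set C := hatClos G X₀ with hcl
  have hcls : ∀ n, cl (n+1) = cl n ∪ ⋃ x ∈ cl n, ⋃ y ∈ cl n, G x y := fun n => rfl
  have hmono : Monotone cl := monotone_nat_of_le_succ fun n => by
    rw [hcls]; exact subset_union_left
  have hcard : ∀ n, #↥(cl n) ≤ μ := by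
    intro n; induction n with
    | zero => exact le_max_left _ _
    | succ n ih =>
      rw [hcls]
      refine (mk_union_le _ _).trans ?_
      have h1 : #↥(⋃ x ∈ cl n, ⋃ y ∈ cl n, G x y) ≤ μ := by
        refine (mk_biUnion_le _ _).trans ?_
        have hb : ∀ x : ↥(cl n), #↥(⋃ y ∈ cl n, G (x : C) y) ≤ μ := by
          intro x
          refine (mk_biUnion_le _ _).trans ?_
          have h2 : (⨆ y : ↥(cl n), #↥(G (x:C) (y:C))) ≤ ℵ₀ := ciSup_le' fun y => hG _ _
          calc #↥(cl n) * (⨆ y : ↥(cl n), #↥(G (x:C) (y:C))) ≤ μ * ℵ₀ := mul_le_mul' ih h2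
          _ ≤ μ * μ := mul_le_mul' le_rfl hℵμ
          _ = μ := mul_eq_self hℵμ
        calc #↥(cl n) * (⨆ x : ↥(cl n), #↥(⋃ y ∈ cl n, G (x:C) y)) ≤ μ * μ :=
              mul_le_mul' ih (ciSup_le' hb)
        _ = μ := mul_eq_self hℵμ
      calc #↥(cl n) + #↥(⋃ x ∈ cl n, ⋃ y ∈ cl n, G x y) ≤ μ + μ := add_le_add ih h1
      _ = μ := add_eq_self hℵμ
  refine ⟨⋃ n : ULift.{u} ℕ, cl n.down, fun x hx => mem_iUnion.2 ⟨⟨0⟩, hx⟩, ?_, ?_, ?_⟩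
  · rintro x hx y hy
    obtain ⟨⟨m⟩, hm⟩ := mem_iUnion.1 hx
    obtain ⟨⟨n⟩, hn⟩ := mem_iUnion.1 hy
    have hx' : x ∈ cl (max m n) := hmono (le_max_left m n) hm
    have hy' : y ∈ cl (max m n) := hmono (le_max_right m n) hn
    intro z hz
    refine mem_iUnion.2 ⟨⟨max m n + 1⟩, ?_⟩
    rw [hcls]
    exact Or.inr (mem_iUnion₂.2 ⟨x, hx', mem_iUnion₂.2 ⟨y, hy', hz⟩⟩)
  · refine (mk_iUnion_le _).trans ?_
    have hn : #(ULift.{u} ℕ) = ℵ₀ := by simp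
    rw [hn]
    calc ℵ₀ * (⨆ n : ULift.{u} ℕ, #↥(cl n.down)) ≤ μ * μ :=
          mul_le_mul' hℵμ (ciSup_le' fun n => hcard n.down)
    _ = μ := mul_eq_self hℵμ
  · intro Z hZ0 hZG x hx
    obtain ⟨⟨n⟩, hn⟩ := mem_iUnion.1 hx
    clear hx
    induction n generalizing x with
    | zero => exact hZ0 hn
    | succ n ih =>
      rw [hcls] at hn
      rcases hn with hn | hn
      · exact ih hn
      · obtain ⟨a, -, hn⟩ := mem_iUnion₂.1 hn
        obtain ⟨b, -, hn⟩ := mem_iUnion₂.1 hn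
        exact hZG a b hn

lemma hat_winning_three {L : Type u} {C : Type u} (q : L ≃ Fin 3)
    (f : C ↪ (Cardinal.aleph 1).ord.ToType) : HatWinning L C ℵ₀ := by
  letI : LinearOrder C := LinearOrder.lift' (⇑f) f.injective
  letI : DecidableEq L := q.decidableEq
  letI : Fintype L := Fintype.ofEquiv (Fin 3) q.symm
  -- countable initial segments
  have hcnt : ∀ M : C, ∃ g : C → ℕ, Set.InjOn g {x | x ≤ M} := by
    intro M
    have h1 : (Set.Iic (f M)).Countable := by
      rw [← Set.Iio_union_right]
      exact ((countable_iff_lt_aleph_one _).2 (mk_Iio_ord_toType (f M))).union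
        (Set.countable_singleton _)
    obtain ⟨g0, hg0⟩ := Set.countable_iff_exists_injective.1 h1
    refine ⟨fun x => if h : f x ≤ f M then g0 ⟨f x, h⟩ else 0, ?_⟩
    intro x hx y hy hxy
    have hx' : f x ≤ f M := hx
    have hy' : f y ≤ f M := hy
    simp only [dif_pos hx', dif_pos hy'] at hxy
    have := hg0 hxy
    exact f.injective (congrArg Subtype.val this)
  choose e he using hcnt
  have hfin3 : ∀ k : Fin 3, k + 1 + 1 = k + 2 ∧ k + 2 + 1 = k ∧ k + 1 + 2 = k ∧
      k + 2 + 2 = k + 1 ∧ k + 1 ≠ k ∧ k + 2 ≠ k ∧ k + 1 ≠ k + 2 := by decide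
  -- the strategy data
  set o1 : Fin 3 → L := fun i => q.symm (i + 1) with ho1
  set o2 : Fin 3 → L := fun i => q.symm (i + 2) with ho2
  set M : Fin 3 → (L → C) → C := fun i h => max (h (o1 i)) (h (o2 i)) with hM
  set N : Fin 3 → (L → C) → ℕ :=
    fun i h => max (e (M i h) (h (o1 i))) (e (M i h) (h (o2 i))) with hN
  have ho1ne : ∀ a : L, o1 (q a) ≠ a := by
    intro a hcon
    have : q a + 1 = q a := by
      conv_rhs => rw [← hcon]
      simp [ho1]
    exact (hfin3 (q a)).2.2.2.2.1 this
  have ho2ne : ∀ a : L, o2 (q a) ≠ a := by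
    intro a hcon
    have : q a + 2 = q a := by
      conv_rhs => rw [← hcon]
      simp [ho2]
    exact (hfin3 (q a)).2.2.2.2.2.1 this
  refine ⟨⟨fun a h => {x | x ≤ M (q a) h ∧ e (M (q a) h) x ≤ N (q a) h}, ?_, ?_, ?_⟩, ?_⟩
  · -- small
    intro a h
    have hfin : {x | x ≤ M (q a) h ∧ e (M (q a) h) x ≤ N (q a) h}.Finite := by
      apply Set.Finite.of_finite_image (f := e (M (q a) h))
      · refine (Set.finite_Iic (N (q a) h)).subset ?_
        rintro _ ⟨x, ⟨-, hx⟩, rfl⟩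
        exact hx
      · exact (he (M (q a) h)).mono fun x hx => hx.1
    exact hfin.lt_aleph0
  · -- continuous
    intro a h
    exact ⟨Finset.univ, fun h' hh => by
      have : h' = h := funext fun i => hh i (Finset.mem_univ i)
      rw [this]⟩
  · -- blind
    intro a h h' hbb
    have h1 : h (o1 (q a)) = h' (o1 (q a)) := hbb _ (ho1ne a)
    have h2 : h (o2 (q a)) = h' (o2 (q a)) := hbb _ (ho2ne a)
    have hMeq : M (q a) h = M (q a) h' := by simp only [hM, h1, h2]
    have hNeq : N (q a) h = N (q a) h' := by simp only [hN, h1, h2, hMeq]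
    rw [hMeq, hNeq]
  · -- winning
    intro h
    by_contra hcon
    push_neg at hcon
    obtain ⟨k, -, hk⟩ := Finset.exists_max_image Finset.univ
      (fun i : Fin 3 => h (q.symm i)) ⟨0, Finset.mem_univ 0⟩
    have hk1 : h (q.symm (k+1)) ≤ h (q.symm k) := hk _ (Finset.mem_univ _)
    have hk2 : h (q.symm (k+2)) ≤ h (q.symm k) := hk _ (Finset.mem_univ _)
    obtain ⟨e11, e21, e12, e22, -, -, -⟩ := hfin3 k
    have hMi : M (k+1) h = h (q.symm k) := by
      simp only [hM, ho1, ho2, e11, e12]; exact max_eq_right hk2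
    have hMj : M (k+2) h = h (q.symm k) := by
      simp only [hM, ho1, ho2, e21, e22]; exact max_eq_left hk1
    have hci := hcon (q.symm (k+1))
    have hcj := hcon (q.symm (k+2))
    simp only [Set.mem_setOf_eq, Equiv.apply_symm_apply, not_and, not_le] at hci hcj
    rw [hMi] at hci
    rw [hMj] at hcj
    have hci' := hci hk1
    have hcj' := hcj hk2
    have hNi : e (h (q.symm k)) (h (q.symm (k+2))) ≤ N (k+1) h := by
      simp only [hN, ho1, ho2, e11, e12, hMi]; exact le_max_left _ _
    have hNj : e (h (q.symm k)) (h (q.symm (k+1))) ≤ N (k+2) h := by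
      simp only [hN, ho1, ho2, e21, e22, hMj]; exact le_max_right _ _
    omega

lemma hat_losing_s6 {L : Type u} {C : Type u} (q : L ≃ Fin 3) (hC : Cardinal.aleph 1 < #C)
    (S : HatStrategy L C ℵ₀) : ¬ S.IsWinning := by
  intro hwin
  have hfin3 : ∀ j : Fin 3, j = 0 ∨ j = 1 ∨ j = 2 := by decide
  set trip : C → C → C → (L → C) := fun a b c l => ![a, b, c] (q l) with htrip
  set G0 : C → C → Set C := fun b c => S.guess (q.symm 0) (trip b b c) with hG0
  set G1 : C → C → Set C := fun a c => S.guess (q.symm 1) (trip a a c) with hG1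
  set G2 : C → C → Set C := fun a b => S.guess (q.symm 2) (trip a b a) with hG2
  have hql : ∀ (l : L) (j : Fin 3), l ≠ q.symm j → q l ≠ j := by
    intro l j hl hc
    exact hl ((q.symm_apply_apply l).symm.trans (congrArg q.symm hc))
  have hblind0 : ∀ a b c, S.guess (q.symm 0) (trip a b c) = G0 b c := by
    intro a b c
    rw [hG0]
    apply S.blind
    intro l hl
    have h0 : q l ≠ 0 := hql l 0 hl
    simp only [htrip]
    rcases hfin3 (q l) with h | h | h
    · exact absurd h h0
    · rw [h]; rfl
    · rw [h]; rfl
  have hblind1 : ∀ a b c, S.guess (q.symm 1) (trip a b c) = G1 a c := by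
    intro a b c
    rw [hG1]
    apply S.blind
    intro l hl
    have h0 : q l ≠ 1 := hql l 1 hl
    simp only [htrip]
    rcases hfin3 (q l) with h | h | h
    · rw [h]; rfl
    · exact absurd h h0
    · rw [h]; rfl
  have hblind2 : ∀ a b c, S.guess (q.symm 2) (trip a b c) = G2 a b := by
    intro a b c
    rw [hG2]
    apply S.blind
    intro l hl
    have h0 : q l ≠ 2 := hql l 2 hl
    simp only [htrip]
    rcases hfin3 (q l) with h | h | h
    · rw [h]; rfl
    · rw [h]; rfl
    · exact absurd h h0
  have htrip0 : ∀ a b c : C, trip a b c (q.symm 0) = a := by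
    intro a b c; simp [htrip]
  have htrip1 : ∀ a b c : C, trip a b c (q.symm 1) = b := by
    intro a b c; simp [htrip]
  have htrip2 : ∀ a b c : C, trip a b c (q.symm 2) = c := by
    intro a b c; simp [htrip]
  have hdis : ∀ a b c : C, a ∈ G0 b c ∨ b ∈ G1 a c ∨ c ∈ G2 a b := by
    intro a b c
    obtain ⟨l, hl⟩ := hwin (trip a b c)
    rcases hfin3 (q l) with h | h | h
    all_goals (
      have hll : l = q.symm _ := (q.symm_apply_apply l).symm.trans (congrArg q.symm h)
      rw [hll] at hl)
    · rw [htrip0, hblind0] at hl; exact Or.inl hl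
    · rw [htrip1, hblind1] at hl; exact Or.inr (Or.inl hl)
    · rw [htrip2, hblind2] at hl; exact Or.inr (Or.inr hl)
  -- cardinality bounds on the guess sets
  have hG0small : ∀ x y, #(G0 x y) ≤ ℵ₀ := fun x y => (S.small _ _).le
  have hG2fin : ∀ x y, #(G2 x y) < ℵ₀ := fun x y => S.small _ _
  -- the big closed set X
  obtain ⟨X₀, hX₀⟩ := le_mk_iff_exists_set.1 hC.le
  obtain ⟨X, hX₀X, hXcl, hXcard, -⟩ := hat_closure G0 hG0small X₀
  have hXcard' : #X < #C := by
    refine lt_of_le_of_lt (hXcard.trans ?_) hC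
    rw [hX₀, max_eq_left (aleph0_le_aleph 1)]
  have hXa1 : Cardinal.aleph 1 ≤ #X := hX₀.symm.le.trans (mk_le_mk_of_subset hX₀X)
  obtain ⟨a, ha⟩ : ∃ a, a ∉ X := by
    by_contra hcon
    push_neg at hcon
    have : X = Set.univ := eq_univ_of_forall hcon
    rw [this, mk_univ] at hXcard'
    exact lt_irrefl _ hXcard'
  -- the small closed set Y inside X
  set K : C → C → Set C := fun x y => (G1 a y ∪ G2 a x) ∩ X with hK
  have hKsmall : ∀ x y, #(K x y) ≤ ℵ₀ := by
    intro x y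
    refine (mk_le_mk_of_subset inter_subset_left).trans ?_
    refine (mk_union_le _ _).trans ?_
    have h1 : #(G1 a y) ≤ ℵ₀ := (S.small _ _).le
    have h2 : #(G2 a x) ≤ ℵ₀ := (hG2fin _ _).le
    calc #(G1 a y) + #(G2 a x) ≤ ℵ₀ + ℵ₀ := add_le_add h1 h2
    _ = ℵ₀ := add_eq_self le_rfl
  obtain ⟨Y₀, hY₀X, hY₀⟩ := le_mk_iff_exists_subset.1 (aleph0_le_aleph 1 |>.trans hXa1)
  obtain ⟨Y, hY₀Y, hYcl, hYcard, hYmin⟩ := hat_closure K hKsmall Y₀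
  have hYX : Y ⊆ X := hYmin X hY₀X fun x y => inter_subset_right
  have hYcard' : #Y ≤ ℵ₀ := hYcard.trans (by rw [hY₀, max_self])
  have hYinf : ℵ₀ ≤ #Y := hY₀.symm.le.trans (mk_le_mk_of_subset hY₀Y)
  obtain ⟨b, hbX, hbY⟩ : ∃ b, b ∈ X ∧ b ∉ Y := by
    by_contra hcon
    push_neg at hcon
    have : #X ≤ #Y := mk_le_mk_of_subset hcon
    exact absurd ((hXa1.trans this).trans hYcard') (not_le.2 aleph0_lt_aleph_one)
  have hbG1 : ∀ c ∈ Y, b ∉ G1 a c := by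
    intro c hc hbc
    exact hbY (hYcl c hc c hc ⟨Or.inl hbc, hbX⟩)
  obtain ⟨c, hcY, hcG2⟩ : ∃ c, c ∈ Y ∧ c ∉ G2 a b := by
    by_contra hcon
    push_neg at hcon
    have : #Y ≤ #(G2 a b) := mk_le_mk_of_subset hcon
    exact absurd (hYinf.trans this) (not_le.2 (hG2fin a b))
  rcases hdis a b c with h | h | h
  · exact ha (hXcl b hbX c (hYX hcY) h)
  · exact hbG1 c hcY h
  · exact hcG2 h

/-- The `(3,κ,ω)`-hat game is winning iff `κ ≤ ℵ₁`. -/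
theorem stmt6 (κ : Cardinal.{u}) :
    HatGameWinning 3 κ ℵ₀ ↔ κ ≤ Cardinal.aleph 1 := by
  obtain ⟨q⟩ : Nonempty ((3 : Cardinal.{u}).out ≃ Fin 3) := by
    rw [← mk_eq_nat_iff]
    rw [mk_out]
    norm_cast
  constructor
  · intro hwin
    by_contra hκ
    push_neg at hκ
    obtain ⟨S, hS⟩ := hwin
    have hC : Cardinal.aleph 1 < #κ.out := by rwa [mk_out]
    exact hat_losing_s6 q hC S hS
  · intro hκ
    have hle : #κ.out ≤ #((Cardinal.aleph 1).ord.ToType) := by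
      rw [mk_out, mk_toType, card_ord]
      exact hκ
    obtain ⟨f⟩ := Cardinal.le_def _ _ |>.1 hle
    exact hat_winning_three q f
end

section
/- Let κ and γ be infinite cardinals. Then κ has the γ-MInA if and only if for every countable set ℱ of continuous functions f : κ^ω → [κ]^{<γ} (where κ and [κ]^{<γ} carry the discrete topology and κ^ω the product topology) there is a countably infinite set A ⊆ κ such that for every α ∈ A, every f ∈ ℱ and every sequence s ∈ (A∖{α})^ω one has α ∉ f(s). -/
open Cardinal Set

universe u v

/-- The canonical type of `κ`-many colours: the ordinals below `κ.ord`,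
equipped with their natural linear order. -/
abbrev HatColour (κ : Cardinal.{u}) : Type u := κ.ord.ToType

/-- `A` is mutually `F`-independent: no `α ∈ A` lies in a value of a function of the countable
family `F` applied to arguments from `A \\ {α}`. -/
def MutuallyIndep {O : Type u} (F : ℕ → Σ n : ℕ, (Fin n → O) → Set O) (A : Set O) : Prop :=
  ∀ α ∈ A, ∀ i : ℕ, ∀ x : Fin (F i).1 → O, (∀ j, x j ∈ A \ {α}) → α ∉ (F i).2 x

/-- `κ` has the `γ`-MInA: for every countable family of finitary functions
`f : κ^n → [κ]^{<γ}` there is a countably infinite mutually independent subset of `κ`. -/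
def MInA (κ γ : Cardinal.{u}) : Prop :=
  ∀ F : ℕ → Σ n : ℕ, (Fin n → HatColour κ) → Set (HatColour κ),
    (∀ i x, #((F i).2 x) < γ) →
    ∃ A : Set (HatColour κ), A.Countable ∧ A.Infinite ∧ MutuallyIndep F A

/-- `κ` is strongly MInA: it has the `γ`-MInA for every infinite cardinal `γ < κ`. -/
def StronglyMInA (κ : Cardinal.{u}) : Prop :=
  ∀ γ : Cardinal.{u}, ℵ₀ ≤ γ → γ < κ → MInA κ γ

/-- For infinite `κ` and `γ`: `κ` has the `γ`-MInA iff for every countable family of continuous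
functions `f : κ^ω → [κ]^{<γ}` there is a countably infinite set `A ⊆ κ` such that no `α ∈ A`
lies in the value of any `f` on any sequence drawn from `A \\ {α}`. -/
theorem stmt7 (κ γ : Cardinal.{u}) (hκ : ℵ₀ ≤ κ) (hγ : ℵ₀ ≤ γ) :
    MInA κ γ ↔
      ∀ F : ℕ → (ℕ → HatColour κ) → Set (HatColour κ),
        (∀ i, FinDep (F i)) → (∀ i s, #(F i s) < γ) →
        ∃ A : Set (HatColour κ), A.Countable ∧ A.Infinite ∧
          ∀ α ∈ A, ∀ i : ℕ, ∀ s : ℕ → HatColour κ,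
            (∀ j, s j ∈ A \ {α}) → α ∉ F i s := by
  constructor
  · -- forward: MInA → continuous version
    intro h F hdep hcard
    -- finitary family indexed by pairs (i, n)
    let G : ℕ → Σ n : ℕ, (Fin n → HatColour κ) → Set (HatColour κ) :=
      fun k => ⟨(Nat.unpair k).2 + 1,
        fun x => F (Nat.unpair k).1 (fun j => x ⟨min j (Nat.unpair k).2, by omega⟩)⟩
    obtain ⟨A, hAc, hAi, hA⟩ := h G (fun i x => hcard _ _)
    refine ⟨A, hAc, hAi, ?_⟩
    intro α hα i s hs
    obtain ⟨Fs, hFs⟩ := hdep i s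
    set n : ℕ := Fs.sup id with hn
    have key := hA α hα (Nat.pair i n)
    simp only [G, Nat.unpair_pair] at key
    have key' := key (fun j => s j) (fun j => hs _)
    simp only at key'
    have heq : F i (fun j => s (min j n)) = F i s := by
      apply hFs
      intro j hj
      have : j ≤ n := Finset.le_sup (f := id) hj
      simp [Nat.min_eq_left this]
    rwa [heq] at key'
  · -- backward: continuous version → MInA
    intro h F hcard
    let G : ℕ → (ℕ → HatColour κ) → Set (HatColour κ) :=
      fun i s => (F i).2 (fun j => s j)
    have hdep : ∀ i, FinDep (G i) := by
      intro i f
      refine ⟨Finset.range (F i).1, fun f' hf' => ?_⟩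
      have : (fun j : Fin (F i).1 => f' j) = fun j : Fin (F i).1 => f j := by
        funext j
        exact hf' j (Finset.mem_range.mpr j.isLt)
      simp only [G, this]
    obtain ⟨A, hAc, hAi, hA⟩ := h G hdep (fun i s => hcard i _)
    refine ⟨A, hAc, hAi, ?_⟩
    intro α hα i x hx
    obtain ⟨β, hβ⟩ := (hAi.diff (Set.finite_singleton α)).nonempty
    set s : ℕ → HatColour κ := fun j => if hj : j < (F i).1 then x ⟨j, hj⟩ else β with hsdef
    have hs : ∀ j, s j ∈ A \ {α} := by
      intro j
      by_cases hj : j < (F i).1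
      · simpa [hsdef, hj] using hx ⟨j, hj⟩
      · simpa [hsdef, hj] using hβ
    have key := hA α hα i s hs
    have : (fun j : Fin (F i).1 => s j) = x := by
      funext j
      simp [hsdef, j.isLt]
    simpa only [G, this] using key
end

section
/- Let κ ≥ 1 be a cardinal and γ an infinite cardinal. Suppose there is a sequence ⟨τ^N : N < ω⟩ of strategies in the (ω,κ,γ)-hat game such that for every h : ω → κ there exist N < ω and i < ω with h(i) ∈ τ^N_i(h restricted to ω∖{i}). Then the (ω,κ,γ)-hat game is winning. -/
open Cardinal Set

universe u v

section Merge

variable {C : Type u} {γ : Cardinal.{u}}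

/-- Shift of a colouring: drop the first `s` values. -/
def shft (s : ℕ) (g : ℕ → C) : ℕ → C := fun j => g (s + j)

variable (τ : ℕ → HatStrategy ℕ C γ)

/-- `Pk τ g k`: some strategy with index `≤ k` catches `g` at a position `≤ k`. -/
def Pk (g : ℕ → C) (k : ℕ) : Prop := ∃ N ≤ k, ∃ j ≤ k, g j ∈ (τ N).guess j g

lemma mk_finsetBiUnion_lt {α : Type*} (hγ : ℵ₀ ≤ γ) (t : Finset α) (f : α → Set C) :
    (∀ a ∈ t, #(f a) < γ) → #(⋃ a ∈ t, f a) < γ := by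
  classical
  induction t using Finset.induction_on with
  | empty =>
    intro _
    simpa using lt_of_lt_of_le aleph0_pos hγ
  | @insert a t ha ih =>
    intro hf
    rw [Finset.set_biUnion_insert]
    exact lt_of_le_of_lt (mk_union_le _ _)
      (Cardinal.add_lt_of_lt hγ (hf _ (Finset.mem_insert_self _ _))
        (ih fun b hb => hf _ (Finset.mem_insert_of_mem hb)))

variable (H : ∀ h : ℕ → C, ∃ N i, h i ∈ (τ N).guess i h)

include H


lemma Pk_exists (g : ℕ → C) : ∃ k, Pk τ g k := by
  obtain ⟨N, i, hi⟩ := H g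
  exact ⟨max N i, N, le_max_left _ _, i, le_max_right _ _, hi⟩

/-- The least `k` such that some strategy with index `≤ k` catches `g` at a position `≤ k`. -/
noncomputable def kval (g : ℕ → C) : ℕ :=
  @Nat.find _ (Classical.decPred _) (Pk_exists τ H g)

lemma kval_spec (g : ℕ → C) : Pk τ g (kval τ H g) :=
  @Nat.find_spec _ (Classical.decPred _) (Pk_exists τ H g)

lemma kval_min {g : ℕ → C} {m : ℕ} (hm : m < kval τ H g) : ¬ Pk τ g m :=
  @Nat.find_min _ (Classical.decPred _) (Pk_exists τ H g) _ hm

lemma kval_le {g : ℕ → C} {m : ℕ} (hm : Pk τ g m) : kval τ H g ≤ m :=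
  @Nat.find_min' _ (Classical.decPred _) (Pk_exists τ H g) _ hm

lemma kval_findep : FinDep (kval τ H) := by
  classical
  intro g
  have hc : ∀ N j : ℕ, ∃ F : Finset ℕ,
      ∀ g' : ℕ → C, (∀ b ∈ F, g' b = g b) → (τ N).guess j g' = (τ N).guess j g :=
    fun N j => (τ N).continuous j g
  choose Fc hFc using hc
  set k := kval τ H g with hk
  refine ⟨(Finset.range (k+1)).biUnion
    (fun N => (Finset.range (k+1)).biUnion (fun j => insert j (Fc N j))), ?_⟩
  intro g' hg'
  have hmem : ∀ N j : ℕ, N ≤ k → j ≤ k →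
      (g' j ∈ (τ N).guess j g' ↔ g j ∈ (τ N).guess j g) := by
    intro N j hN hj
    have hsub : ∀ b ∈ insert j (Fc N j), g' b = g b := by
      intro b hb
      exact hg' b (Finset.mem_biUnion.2 ⟨N, Finset.mem_range.2 (by omega),
        Finset.mem_biUnion.2 ⟨j, Finset.mem_range.2 (by omega), hb⟩⟩)
    have h1 : (τ N).guess j g' = (τ N).guess j g :=
      hFc N j g' (fun b hb => hsub b (Finset.mem_insert_of_mem hb))
    have h2 : g' j = g j := hsub j (Finset.mem_insert_self _ _)
    rw [h1, h2]
  have hPk' : Pk τ g' k := by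
    obtain ⟨N, hN, j, hj, hm⟩ := kval_spec τ H g
    exact ⟨N, hN, j, hj, (hmem N j hN hj).2 hm⟩
  have hmin : ∀ m, m < k → ¬ Pk τ g' m := by
    rintro m hmk ⟨N, hN, j, hj, hm⟩
    exact kval_min τ H hmk
      ⟨N, hN, j, hj, (hmem N j (hN.trans hmk.le) (hj.trans hmk.le)).1 hm⟩
  have h1 : kval τ H g' ≤ k := kval_le τ H hPk'
  have h2 : ¬ (kval τ H g' < k) := fun hlt => hmin _ hlt (kval_spec τ H g')
  omega

/-- The merged strategy's guess: logician `i` unions the guesses of `τ N` at position `i - s`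
for the shifted colourings `shft s h`, for `s ≤ i` and `N` bounded by the complexity of the
tail of `h` beyond `i`. -/
noncomputable def mguess (i : ℕ) (h : ℕ → C) : Set C :=
  ⋃ s ∈ Finset.range (i+1), ⋃ N ∈ Finset.range (kval τ H (shft (i+1) h) + 1),
    (τ N).guess (i - s) (shft s h)

lemma mguess_small (hγ : ℵ₀ ≤ γ) (i : ℕ) (h : ℕ → C) : #(mguess τ H i h) < γ := by
  unfold mguess
  exact mk_finsetBiUnion_lt hγ _ _ fun s _ => mk_finsetBiUnion_lt hγ _ _ fun N _ => (τ N).small _ _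

lemma mguess_blind (i : ℕ) (h h' : ℕ → C) (hhh : ∀ b, b ≠ i → h b = h' b) :
    mguess τ H i h = mguess τ H i h' := by
  have hsh : shft (i+1) h = shft (i+1) h' := by
    funext j; exact hhh (i+1+j) (by omega)
  unfold mguess
  rw [hsh]
  refine Set.iUnion_congr fun s => Set.iUnion_congr fun hs => Set.iUnion_congr fun N =>
    Set.iUnion_congr fun _ => ?_
  have hsle : s ≤ i := by
    have := Finset.mem_range.1 hs; omega
  exact (τ N).blind (i - s) (shft s h) (shft s h') (fun b hb => hhh (s+b) (by omega))

lemma mguess_findep (i : ℕ) : FinDep (mguess τ H i) := by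
  classical
  intro h
  obtain ⟨F₀, hF₀⟩ := kval_findep τ H (shft (i+1) h)
  have hc : ∀ s N : ℕ, ∃ F : Finset ℕ, ∀ g' : ℕ → C,
      (∀ b ∈ F, g' b = shft s h b) →
      (τ N).guess (i - s) g' = (τ N).guess (i - s) (shft s h) :=
    fun s N => (τ N).continuous (i - s) (shft s h)
  choose Fc hFc using hc
  refine ⟨F₀.image (fun j => i+1+j) ∪ (Finset.range (i+1)).biUnion
      (fun s => (Finset.range (kval τ H (shft (i+1) h) + 1)).biUnion
        (fun N => (Fc s N).image (fun b => s + b))), ?_⟩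
  intro h' hh'
  have hsh : ∀ j ∈ F₀, shft (i+1) h' j = shft (i+1) h j := by
    intro j hj
    exact hh' _ (Finset.mem_union_left _ (Finset.mem_image.2 ⟨j, hj, rfl⟩))
  have hkeq : kval τ H (shft (i+1) h') = kval τ H (shft (i+1) h) := hF₀ _ hsh
  have hguess : ∀ s ≤ i, ∀ N ≤ kval τ H (shft (i+1) h),
      (τ N).guess (i-s) (shft s h') = (τ N).guess (i-s) (shft s h) := by
    intro s hs N hN
    refine hFc s N _ fun b hb => ?_
    exact hh' _ (Finset.mem_union_right _ (Finset.mem_biUnion.2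
      ⟨s, Finset.mem_range.2 (by omega), Finset.mem_biUnion.2
        ⟨N, Finset.mem_range.2 (by omega), Finset.mem_image.2 ⟨b, hb, rfl⟩⟩⟩))
  unfold mguess
  rw [hkeq]
  refine Set.iUnion_congr fun s => Set.iUnion_congr fun hs => Set.iUnion_congr fun N =>
    Set.iUnion_congr fun hN => ?_
  exact hguess s (Nat.lt_succ_iff.1 (Finset.mem_range.1 hs)) N
    (Nat.lt_succ_iff.1 (Finset.mem_range.1 hN))

lemma mguess_winning (h : ℕ → C) : ∃ a, h a ∈ mguess τ H a h := by
  by_contra hbad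
  push_neg at hbad
  have key : ∀ s : ℕ, ∃ t : ℕ, kval τ H (shft t h) < kval τ H (shft s h) := by
    intro s
    obtain ⟨N, hN, j, hj, hmem⟩ := kval_spec τ H (shft s h)
    refine ⟨s + j + 1, ?_⟩
    by_contra hle
    push_neg at hle
    apply hbad (s + j)
    unfold mguess
    refine Set.mem_iUnion.2 ⟨s, Set.mem_iUnion.2 ⟨?_, Set.mem_iUnion.2 ⟨N,
      Set.mem_iUnion.2 ⟨?_, ?_⟩⟩⟩⟩
    · exact Finset.mem_range.2 (by omega)
    · exact Finset.mem_range.2 (by omega)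
    · have hj' : (s + j) - s = j := by omega
      rw [hj']
      exact hmem
  let f : ℕ → ℕ := fun n => Nat.rec 0 (fun _ prev => Classical.choose (key prev)) n
  have hf : ∀ n, kval τ H (shft (f (n+1)) h) < kval τ H (shft (f n) h) :=
    fun n => Classical.choose_spec (key (f n))
  have mono : ∀ n, kval τ H (shft (f n) h) + n ≤ kval τ H (shft (f 0) h) := by
    intro n
    induction n with
    | zero => omega
    | succ n ih =>
      have := hf n
      omega
  have := mono (kval τ H (shft (f 0) h) + 1)
  omega

end Merge

/-- If there is a sequence of strategies `τ N` for the `(ω,κ,γ)`-hat game (with `γ` infinite,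
`κ ≥ 1`) such that against every colouring some logician guesses correctly when following some
`τ N`, then the `(ω,κ,γ)`-hat game is winning. -/
theorem stmt8 (κ γ : Cardinal.{u}) (hκ : 1 ≤ κ) (hγ : ℵ₀ ≤ γ)
    (τ : ℕ → HatStrategy ℕ κ.out γ)
    (H : ∀ h : ℕ → κ.out, ∃ N i, h i ∈ (τ N).guess i h) :
    HatWinning ℕ κ.out γ := by
  exact ⟨⟨mguess τ H, fun a h => mguess_small τ H hγ a h, fun a => mguess_findep τ H a,
    fun a h h' hab => mguess_blind τ H a h h' hab⟩, fun h => mguess_winning τ H h⟩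
end

section
/- Let κ be an infinite cardinal and γ an infinite cardinal. The (ω,κ,γ)-hat game is winning if and only if κ does not have the γ-MInA. -/
open Cardinal Set

universe u v

namespace Stmt9Aux

/-! ### Cardinality helpers -/

lemma mk_biUnion_lt {C : Type u} {ι : Type} {γ : Cardinal.{u}} (hγ : ℵ₀ ≤ γ)
    (t : Finset ι) (s : ι → Set C) (hs : ∀ i, #(s i) < γ) :
    #(⋃ i ∈ t, s i) < γ := by
  classical
  induction t using Finset.induction with
  | empty =>
      simp only [Finset.notMem_empty, Set.iUnion_of_empty, Set.iUnion_empty,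
        Set.iUnion_false]
      exact lt_of_lt_of_le (by simpa using aleph0_pos) hγ
  | @insert a t ha ih =>
      rw [Finset.set_biUnion_insert]
      exact lt_of_le_of_lt (mk_union_le _ _) (Cardinal.add_lt_of_lt hγ (hs a) ih)

lemma mk_iUnion_lt {C : Type u} {ι : Type} [Fintype ι] {γ : Cardinal.{u}} (hγ : ℵ₀ ≤ γ)
    (s : ι → Set C) (hs : ∀ i, #(s i) < γ) : #(⋃ i, s i) < γ := by
  have h : (⋃ i, s i) = ⋃ i ∈ (Finset.univ : Finset ι), s i := by simp
  rw [h]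
  exact mk_biUnion_lt hγ _ s hs

/-! ### The strategy built from a family with no infinite independent set -/

variable {C O : Type u}

/-- The family `F`, conjugated to the colour type `C`. -/
def GsetC (ee : O ≃ C) (F : ℕ → Σ k : ℕ, (Fin k → O) → Set O)
    (i : ℕ) (y : Fin (F i).1 → C) : Set C :=
  ee '' ((F i).2 fun j => ee.symm (y j))

/-- Logician `n` has "found" something by stage `M` of scanning `h` (never looking at
coordinate `n`): either a repetition, or a valid dependency code of rank `< M` avoiding `n`. -/
def Found (ee : O ≃ C) (F : ℕ → Σ k : ℕ, (Fin k → O) → Set O)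
    (n M : ℕ) (h : ℕ → C) : Prop :=
  (∃ j k, j < k ∧ k < M ∧ j ≠ n ∧ k ≠ n ∧ h j = h k) ∨
  (∃ i, i < M ∧ ∃ t, t < M ∧ t ≠ n ∧ ∃ p : Fin (F i).1 → ℕ,
    (∀ j, p j < M ∧ p j ≠ t ∧ p j ≠ n) ∧ h t ∈ GsetC ee F i fun j => h (p j))

lemma found_congr {ee : O ≃ C} {F : ℕ → Σ k : ℕ, (Fin k → O) → Set O}
    {n M : ℕ} {h h' : ℕ → C} (hag : ∀ j, j < M → j ≠ n → h j = h' j) :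
    Found ee F n M h → Found ee F n M h' := by
  rintro (⟨j, k, hjk, hkM, hjn, hkn, he⟩ | ⟨i, hi, t, ht, htn, p, hp, hv⟩)
  · exact Or.inl ⟨j, k, hjk, hkM, hjn, hkn, by
      rw [← hag j (hjk.trans hkM) hjn, ← hag k hkM hkn]; exact he⟩
  · refine Or.inr ⟨i, hi, t, ht, htn, p, hp, ?_⟩
    have h1 : (fun j => h' (p j)) = fun j => h (p j) :=
      funext fun j => (hag _ (hp j).1 (hp j).2.2).symm
    rw [h1, ← hag t ht htn]
    exact hv

variable (ee : O ≃ C) (F : ℕ → Σ k : ℕ, (Fin k → O) → Set O)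

/-- The scanning bound of logician `n` on colouring `h`. -/
noncomputable def hatB (hex : ∀ (n : ℕ) (h : ℕ → C), ∃ M, Found ee F n M h)
    (n : ℕ) (h : ℕ → C) : ℕ :=
  @Nat.find (fun M => Found ee F n M h) (fun _ => Classical.dec _) (hex n h)

lemma hatB_found (hex : ∀ (n : ℕ) (h : ℕ → C), ∃ M, Found ee F n M h) (n : ℕ) (h : ℕ → C) :
    Found ee F n (hatB ee F hex n h) h :=
  @Nat.find_spec (fun M => Found ee F n M h) (fun _ => Classical.dec _) (hex n h)

lemma hatB_le {hex : ∀ (n : ℕ) (h : ℕ → C), ∃ M, Found ee F n M h} {n : ℕ} {h : ℕ → C}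
    {M : ℕ} (hM : Found ee F n M h) : hatB ee F hex n h ≤ M :=
  @Nat.find_min' (fun M => Found ee F n M h) (fun _ => Classical.dec _) (hex n h) M hM

lemma hatB_min {hex : ∀ (n : ℕ) (h : ℕ → C), ∃ M, Found ee F n M h} {n : ℕ} {h : ℕ → C}
    {M : ℕ} (hM : M < hatB ee F hex n h) : ¬ Found ee F n M h :=
  @Nat.find_min (fun M => Found ee F n M h) (fun _ => Classical.dec _) (hex n h) M hM

lemma hatB_congr {hex : ∀ (n : ℕ) (h : ℕ → C), ∃ M, Found ee F n M h} {n : ℕ}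
    {h h' : ℕ → C} (hag : ∀ j, j < hatB ee F hex n h → j ≠ n → h j = h' j) :
    hatB ee F hex n h' = hatB ee F hex n h := by
  apply le_antisymm
  · exact hatB_le ee F (found_congr hag (hatB_found ee F hex n h))
  · by_contra hlt
    push_neg at hlt
    refine hatB_min ee F (hex := hex) (n := n) (h := h) hlt ?_
    exact found_congr (fun j hj hjn => (hag j (hj.trans hlt) hjn).symm)
      (hatB_found ee F hex n h')

/-- The guess of logician `n`. -/
noncomputable def hatGuess (hex : ∀ (n : ℕ) (h : ℕ → C), ∃ M, Found ee F n M h)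
    (n : ℕ) (h : ℕ → C) : Set C :=
  (h '' Set.Iio n) ∪
  {c | ∃ i < hatB ee F hex n h, ∃ p : Fin (F i).1 → ℕ,
      (∀ j, p j < hatB ee F hex n h ∧ p j ≠ n) ∧ c ∈ GsetC ee F i fun j => h (p j)}

lemma hatGuess_congr {hex : ∀ (n : ℕ) (h : ℕ → C), ∃ M, Found ee F n M h} {n : ℕ}
    {h h' : ℕ → C}
    (hag : ∀ j, j ≠ n → (j < hatB ee F hex n h ∨ j < n) → h j = h' j) :
    hatGuess ee F hex n h' = hatGuess ee F hex n h := by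
  have hB : hatB ee F hex n h' = hatB ee F hex n h :=
    hatB_congr ee F fun j hj hjn => hag j hjn (Or.inl hj)
  unfold hatGuess
  rw [hB]
  congr 1
  · exact Set.image_congr fun j hj =>
      (hag j (Nat.ne_of_lt hj) (Or.inr hj)).symm
  · ext c
    simp only [Set.mem_setOf_eq]
    constructor
    · rintro ⟨i, hi, p, hp, hc⟩
      refine ⟨i, hi, p, hp, ?_⟩
      have : (fun j => h (p j)) = fun j => h' (p j) :=
        funext fun j => hag _ (hp j).2 (Or.inl (hp j).1)
      rw [this]; exact hc
    · rintro ⟨i, hi, p, hp, hc⟩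
      refine ⟨i, hi, p, hp, ?_⟩
      have : (fun j => h' (p j)) = fun j => h (p j) :=
        funext fun j => (hag _ (hp j).2 (Or.inl (hp j).1)).symm
      rw [this]; exact hc

lemma hatGuess_small {γ : Cardinal.{u}} (hγ : ℵ₀ ≤ γ)
    (hex : ∀ (n : ℕ) (h : ℕ → C), ∃ M, Found ee F n M h)
    (hsm : ∀ i x, #((F i).2 x) < γ) (n : ℕ) (h : ℕ → C) :
    #(hatGuess ee F hex n h) < γ := by
  classical
  set B := hatB ee F hex n h with hB
  have hsub : hatGuess ee F hex n h ⊆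
      (h '' Set.Iio n) ∪
        ⋃ z : Σ i : Fin B, Fin (F (i : ℕ)).1 → Fin B,
          GsetC ee F (z.1 : ℕ) fun j => h (z.2 j) := by
    rintro c (hc | ⟨i, hi, p, hp, hc⟩)
    · exact Or.inl hc
    · refine Or.inr (Set.mem_iUnion.2 ⟨⟨⟨i, hi⟩, fun j => ⟨p j, (hp j).1⟩⟩, ?_⟩)
      exact hc
  refine lt_of_le_of_lt (mk_le_mk_of_subset hsub) ?_
  refine lt_of_le_of_lt (mk_union_le _ _) (Cardinal.add_lt_of_lt hγ ?_ ?_)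
  · exact lt_of_lt_of_le (((Set.finite_Iio n).image h).lt_aleph0) hγ
  · refine mk_iUnion_lt hγ _ fun z => ?_
    unfold GsetC
    rw [mk_image_eq ee.injective]
    exact hsm _ _

/-- Totality of the scan. -/
lemma found_exists
    (hF : ∀ A : Set O, A.Countable → A.Infinite → ¬ MutuallyIndep F A)
    (n : ℕ) (h : ℕ → C) : ∃ M, Found ee F n M h := by
  classical
  by_cases hinj : Set.InjOn h {j | j ≠ n}
  · set A : Set O := (fun t => ee.symm (h t)) '' {j | j ≠ n} with hA
    have hc : A.Countable := (Set.to_countable _).image _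
    have hcompl : ({j | j ≠ n} : Set ℕ).Infinite := by
      have : ({j | j ≠ n} : Set ℕ) = ({n}ᶜ : Set ℕ) := by ext j; simp
      rw [this]
      exact (Set.finite_singleton n).infinite_compl
    have hinj2 : Set.InjOn (fun t => ee.symm (h t)) {j | j ≠ n} := by
      intro a ha b hb hab
      exact hinj ha hb (ee.symm.injective hab)
    have hi : A.Infinite := (Set.infinite_image_iff hinj2).mpr hcompl
    have hni := hF A hc hi
    rw [MutuallyIndep] at hni
    push_neg at hni
    obtain ⟨α, hαA, i, x, hx, hαf⟩ := hni
    obtain ⟨t, htn, rfl⟩ := hαA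
    have hxx : ∀ j, ∃ m, m ≠ n ∧ ee.symm (h m) = x j := by
      intro j
      obtain ⟨m, hm, hmx⟩ := (hx j).1
      exact ⟨m, hm, hmx⟩
    choose m hm hmx using hxx
    have hmt : ∀ j, m j ≠ t := by
      intro j hj
      apply (hx j).2
      rw [Set.mem_singleton_iff, ← hmx j, hj]
    refine ⟨max i (max t (Finset.univ.sup m)) + 1,
      Or.inr ⟨i, ?_, t, ?_, htn, m, fun j => ⟨?_, hmt j, hm j⟩, ?_⟩⟩
    · omega
    · omega
    · have : m j ≤ Finset.univ.sup m := Finset.le_sup (Finset.mem_univ j)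
      omega
    · show h t ∈ GsetC ee F i fun j => h (m j)
      unfold GsetC
      have hxe : (fun j => ee.symm (h (m j))) = x := funext hmx
      rw [hxe]
      exact ⟨ee.symm (h t), hαf, by simp⟩
  · rw [Set.InjOn] at hinj
    push_neg at hinj
    obtain ⟨a, ha, b, hb, hab, hne⟩ := hinj
    rcases hne.lt_or_gt with hl | hl
    · exact ⟨b + 1, Or.inl ⟨a, b, hl, b.lt_succ_self, ha, hb, hab⟩⟩
    · exact ⟨a + 1, Or.inl ⟨b, a, hl, a.lt_succ_self, hb, ha, hab.symm⟩⟩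

/-- The strategy wins. -/
lemma hatGuess_winning
    (hF : ∀ A : Set O, A.Countable → A.Infinite → ¬ MutuallyIndep F A)
    (hex : ∀ (n : ℕ) (h : ℕ → C), ∃ M, Found ee F n M h)
    (h : ℕ → C) : ∃ n, h n ∈ hatGuess ee F hex n h := by
  classical
  by_cases hinj : Function.Injective h
  · -- there is a valid dependency code; take one of minimal rank
    have hD : ∃ r, ∃ i, ∃ t, ∃ p : Fin (F i).1 → ℕ, i < r ∧ t < r ∧
        (∀ j, p j < r ∧ p j ≠ t) ∧ h t ∈ GsetC ee F i fun j => h (p j) := by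
      set A : Set O := Set.range (fun t => ee.symm (h t)) with hA
      have hc : A.Countable := Set.countable_range _
      have hi : A.Infinite := Set.infinite_range_of_injective (fun a b hab =>
        hinj (ee.symm.injective hab))
      have hni := hF A hc hi
      rw [MutuallyIndep] at hni
      push_neg at hni
      obtain ⟨α, hαA, i, x, hx, hαf⟩ := hni
      obtain ⟨t, rfl⟩ := hαA
      have hxx : ∀ j, ∃ m, ee.symm (h m) = x j := fun j => (hx j).1
      choose m hmx using hxx
      have hmt : ∀ j, m j ≠ t := by
        intro j hj
        apply (hx j).2
        rw [Set.mem_singleton_iff, ← hmx j, hj]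
      refine ⟨max i (max t (Finset.univ.sup m)) + 1, i, t, m, by omega, by omega,
        fun j => ⟨?_, hmt j⟩, ?_⟩
      · have : m j ≤ Finset.univ.sup m := Finset.le_sup (Finset.mem_univ j)
        omega
      · show h t ∈ GsetC ee F i fun j => h (m j)
        unfold GsetC
        have hxe : (fun j => ee.symm (h (m j))) = x := funext hmx
        rw [hxe]
        exact ⟨ee.symm (h t), hαf, by simp⟩
    have hDdec : DecidablePred fun r => ∃ i, ∃ t, ∃ p : Fin (F i).1 → ℕ, i < r ∧ t < r ∧
        (∀ j, p j < r ∧ p j ≠ t) ∧ h t ∈ GsetC ee F i fun j => h (p j) :=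
      fun _ => Classical.dec _
    obtain ⟨i₀, t₀, p₀, hi₀, ht₀, hp₀, hv₀⟩ := Nat.find_spec hD
    refine ⟨t₀, Or.inr ⟨i₀, ?_, p₀, fun j => ⟨?_, (hp₀ j).2⟩, hv₀⟩⟩
    all_goals {
      have hrB : Nat.find hD ≤ hatB ee F hex t₀ h := by
        rcases hatB_found ee F hex t₀ h with ⟨j, k, hjk, _, _, _, he⟩ |
          ⟨i, hi, t, ht, htn, p, hp, hv⟩
        · exact absurd (hinj he) (Nat.ne_of_lt hjk)
        · exact Nat.find_min' hD ⟨i, t, p, hi, ht, fun j => ⟨(hp j).1, (hp j).2.1⟩, hv⟩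
      first
        | exact lt_of_lt_of_le hi₀ hrB
        | exact lt_of_lt_of_le (hp₀ _).1 hrB
    }
  · rw [Function.Injective] at hinj
    push_neg at hinj
    obtain ⟨a, b, hab, hne⟩ := hinj
    rcases hne.lt_or_gt with hl | hl
    · exact ⟨b, Or.inl ⟨a, hl, hab⟩⟩
    · exact ⟨a, Or.inl ⟨b, hl, hab.symm⟩⟩

/-! ### From a winning strategy to a counterexample family -/

/-- Index adjustment for building finitary functions from a strategy. -/
def cIdx (n m : ℕ) (i : ℕ) : Fin (m + 2) :=
  if hh : i < m + 2 ∧ i ≠ n then ⟨i, hh.1⟩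
  else if n = 0 then ⟨1, by omega⟩ else ⟨0, by omega⟩

/-- The finitary function family extracted from a strategy. -/
def Fdef {γ : Cardinal.{u}} (ee : O ≃ C) (S : HatStrategy ℕ C γ) (nm : ℕ × ℕ) :
    Σ k : ℕ, (Fin k → O) → Set O :=
  ⟨nm.2 + 2, fun x => ee.symm '' S.guess nm.1 fun i => ee (x (cIdx nm.1 nm.2 i))⟩

lemma sigma_mem_cast {O : Type u} {s t : Σ k : ℕ, (Fin k → O) → Set O} (hst : s = t)
    (x : Fin t.1 → O) {α : O} (hα : α ∈ t.2 x) (hcast : s.1 = t.1) :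
    α ∈ s.2 fun j => x (Fin.cast hcast j) := by
  subst hst
  exact hα

end Stmt9Aux

open Stmt9Aux in
/-- For infinite `κ` and `γ`, the `(ω,κ,γ)`-hat game is winning iff `κ` does not have the
`γ`-MInA. -/
theorem stmt9 (κ γ : Cardinal.{u}) (hκ : ℵ₀ ≤ κ) (hγ : ℵ₀ ≤ γ) :
    HatWinning ℕ κ.out γ ↔ ¬ MInA κ γ := by
  have hOC : #(HatColour κ) = #(κ.out) := by
    rw [Cardinal.mk_toType, card_ord, mk_out]
  obtain ⟨ee⟩ : Nonempty (HatColour κ ≃ κ.out) := Cardinal.eq.mp hOC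
  constructor
  · rintro ⟨S, hS⟩ hM
    classical
    set F : ℕ → Σ k : ℕ, (Fin k → HatColour κ) → Set (HatColour κ) :=
      fun k => Fdef ee S (Nat.pairEquiv.symm k) with hFdefn
    have hsm : ∀ i x, #((F i).2 x) < γ := by
      intro i x
      show #(ee.symm '' _) < γ
      rw [mk_image_eq ee.symm.injective]
      exact S.small _ _
    obtain ⟨A, hAc, hAi, hAind⟩ := hM F hsm
    let a : ℕ → HatColour κ := fun k => (Set.Infinite.natEmbedding A hAi k : HatColour κ)
    have hainj : Function.Injective a := fun x y hxy =>
      (Set.Infinite.natEmbedding A hAi).injective (Subtype.coe_injective hxy)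
    have haA : ∀ k, a k ∈ A := fun k => (Set.Infinite.natEmbedding A hAi k).2
    set h : ℕ → κ.out := fun i => ee (a i) with hh
    obtain ⟨n, hn⟩ := hS h
    set j₀ : ℕ := if n = 0 then 1 else 0 with hj₀def
    have hj₀ : j₀ ≠ n := by
      rw [hj₀def]; split <;> omega
    set h' : ℕ → κ.out := Function.update h n (ee (a j₀)) with hh'
    have hbl : S.guess n h = S.guess n h' :=
      S.blind n h h' fun b hb => (Function.update_of_ne hb _ _).symm
    obtain ⟨Fs, hFs⟩ := S.continuous n h'
    set m : ℕ := Fs.sup id + n + 1 with hm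
    have hFsm : ∀ i ∈ Fs, i < m := by
      intro i hi
      have : i ≤ Fs.sup id := Finset.le_sup (f := id) hi
      omega
    set x : Fin (m + 2) → HatColour κ :=
      (fun i => if (i : ℕ) = n then a j₀ else a (i : ℕ)) with hx
    have hg : ∀ i ∈ Fs, (fun i : ℕ => ee (x (cIdx n m i))) i = h' i := by
      intro i hi
      have him : i < m + 2 := by have := hFsm i hi; omega
      by_cases hin : i = n
      · subst hin
        have hc : cIdx i m i = if i = 0 then (⟨1, by omega⟩ : Fin (m + 2)) else ⟨0, by omega⟩ := by
          unfold cIdx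
          rw [dif_neg (by simp)]
        show ee (x (cIdx i m i)) = h' i
        rw [hc, hh', Function.update_self]
        by_cases h0 : i = 0
        · rw [if_pos h0, hx]
          simp only [h0]
          have : ((⟨1, by omega⟩ : Fin (m + 2)) : ℕ) = 1 := rfl
          rw [hj₀def, if_pos h0]
          norm_num
        · rw [if_neg h0, hx]
          simp only []
          have h1 : ((⟨0, by omega⟩ : Fin (m + 2)) : ℕ) = 0 := rfl
          rw [hj₀def, if_neg h0]
          have h2 : (0 : ℕ) ≠ i := fun hcc => h0 hcc.symm
          simp [h1, h2]
      · have hc : cIdx n m i = ⟨i, him⟩ := dif_pos ⟨him, hin⟩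
        show ee (x (cIdx n m i)) = h' i
        rw [hc, hh', Function.update_of_ne hin, hh, hx]
        have : ((⟨i, him⟩ : Fin (m + 2)) : ℕ) = i := rfl
        simp [this, hin]
    have hgg : S.guess n (fun i => ee (x (cIdx n m i))) = S.guess n h' := hFs _ hg
    have hmem : a n ∈ (Fdef ee S (n, m)).2 x := by
      show a n ∈ ee.symm '' S.guess n fun i => ee (x (cIdx n m i))
      rw [hgg, ← hbl]
      exact ⟨h n, hn, by rw [hh]; simp⟩
    have hFi : F (Nat.pairEquiv (n, m)) = Fdef ee S (n, m) := by
      simp only [hFdefn, Equiv.symm_apply_apply]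
    have hcast : (F (Nat.pairEquiv (n, m))).1 = m + 2 := by rw [hFi]; rfl
    have hcast' : (F (Nat.pairEquiv (n, m))).1 = (Fdef ee S (n, m)).1 := hcast
    set x' : Fin (F (Nat.pairEquiv (n, m))).1 → HatColour κ :=
      fun j => x (Fin.cast hcast' j) with hx'
    have hx'mem : ∀ j, x' j ∈ A \ {a n} := by
      intro j
      simp only [hx', hx]
      split_ifs with hjn
      · exact ⟨haA j₀, fun hcc => hj₀ (hainj (Set.mem_singleton_iff.mp hcc))⟩
      · exact ⟨haA _, fun hcc => hjn (hainj (Set.mem_singleton_iff.mp hcc))⟩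
    have hmem' : a n ∈ (F (Nat.pairEquiv (n, m))).2 x' :=
      sigma_mem_cast hFi x hmem hcast'
    exact hAind (a n) (haA n) (Nat.pairEquiv (n, m)) x' hx'mem hmem'
  · intro hM
    rw [MInA] at hM
    push_neg at hM
    obtain ⟨F, hsm, hcnt⟩ := hM
    have hF : ∀ A : Set (HatColour κ), A.Countable → A.Infinite → ¬ MutuallyIndep F A := by
      intro A hc hi hind
      exact hcnt A hc hi hind
    have hex : ∀ (n : ℕ) (h : ℕ → κ.out), ∃ M, Found ee F n M h :=
      found_exists ee F hF
    refine ⟨⟨hatGuess ee F hex, hatGuess_small ee F hγ hex hsm, ?_, ?_⟩, ?_⟩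
    · intro n h
      refine ⟨Finset.range (max (hatB ee F hex n h) n), fun h' hagr => ?_⟩
      refine hatGuess_congr ee F fun j hjn hj => ?_
      refine (hagr j ?_).symm
      rw [Finset.mem_range]
      rcases hj with hj | hj
      · omega
      · omega
    · intro n h h' hb
      exact hatGuess_congr ee F (hex := hex) (h := h') (h' := h) fun j hjn _ => (hb j hjn).symm
    · intro h
      exact hatGuess_winning ee F hF hex h
end

section
/- Let λ ≥ 1, κ ≥ 1 and γ ≥ 2 be cardinals. Suppose that for every strategy ⟨f_α : α < λ⟩ in the (λ,κ,γ)-hat game there exist a nonempty subset Y ⊆ λ and a function h : Y → κ such that for every α ∈ Y: (i) for any two functions h₁, h₂ : λ → κ extending h, f_α(h₁ restricted to λ∖{α}) = f_α(h₂ restricted to λ∖{α}) (the guess of logician α depends only on the hats in Y), and (ii) for every h' : λ → κ extending h, h(α) ∉ f_α(h' restricted to λ∖{α}). Then the (λ,κ,γ)-hat game is losing. -/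
open Cardinal Set

universe u v

/-- If for every strategy in the `(λ,κ,γ)`-hat game there is a nonempty set `Y` of logicians and
a colouring `h` of the hats in `Y` such that every logician in `Y` (i) produces the same guess
against any two colourings extending `h` (their guess only depends on the hats in `Y`) and
(ii) guesses incorrectly against every colouring extending `h`, then the `(λ,κ,γ)`-hat game is
losing. -/
theorem stmt10 (lam κ γ : Cardinal.{u}) (hlam : 1 ≤ lam) (hκ : 1 ≤ κ) (hγ : 2 ≤ γ)
    (H : ∀ S : HatStrategy lam.out κ.out γ,
      ∃ Y : Set lam.out, Y.Nonempty ∧ ∃ h : lam.out → κ.out,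
        ∀ α ∈ Y,
          (∀ h₁ h₂ : lam.out → κ.out, (∀ y ∈ Y, h₁ y = h y) → (∀ y ∈ Y, h₂ y = h y) →
            S.guess α h₁ = S.guess α h₂) ∧
          (∀ h' : lam.out → κ.out, (∀ y ∈ Y, h' y = h y) → h α ∉ S.guess α h')) :
    ¬ HatGameWinning lam κ γ := by
  classical
  rintro ⟨S, hS⟩
  have hCne : Nonempty κ.out := by
    rw [← Cardinal.mk_ne_zero_iff, Cardinal.mk_out]
    intro h0
    rw [h0] at hκ
    simp at hκ
  obtain ⟨c₀⟩ := hCne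
  -- the collection of "good" partial colourings (as graphs)
  set 𝒮 : Set (Set (lam.out × κ.out)) :=
    {p | (∀ a b b', (a, b) ∈ p → (a, b') ∈ p → b = b') ∧
      ∀ α, (∃ c, (α, c) ∈ p) → ∀ g : lam.out → κ.out,
        (∀ q ∈ p, g q.1 = q.2) → g α ∉ S.guess α g} with h𝒮
  have hz : ∀ c ⊆ 𝒮, IsChain (· ⊆ ·) c → ∃ ub ∈ 𝒮, ∀ s ∈ c, s ⊆ ub := by
    intro c hc hchain
    refine ⟨⋃₀ c, ⟨?_, ?_⟩, fun s hs => subset_sUnion_of_mem hs⟩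
    · rintro a b b' ⟨p, hp, hbp⟩ ⟨q, hq, hbq⟩
      rcases hchain.total hp hq with hpq | hqp
      · exact (hc hq).1 a b b' (hpq hbp) hbq
      · exact (hc hp).1 a b b' hbp (hqp hbq)
    · rintro α ⟨cc, p, hp, hcp⟩ g hg
      exact (hc hp).2 α ⟨cc, hcp⟩ g fun q hq => hg q ⟨p, hp, hq⟩
  obtain ⟨m, hmax⟩ := zorn_subset 𝒮 hz
  have hm𝒮 : m ∈ 𝒮 := hmax.prop
  -- the domain of `m` and a total extension `h₀`
  have hh₀ : ∀ a : lam.out, (∃ c, (a, c) ∈ m) →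
      (a, if hd : ∃ c, (a, c) ∈ m then hd.choose else c₀) ∈ m := by
    intro a ha
    rw [dif_pos ha]
    exact ha.choose_spec
  set h₀ : lam.out → κ.out :=
    fun a => if hd : ∃ c, (a, c) ∈ m then hd.choose else c₀ with hh₀def
  have hext : ∀ q ∈ m, h₀ q.1 = q.2 := by
    rintro ⟨a, b⟩ hq
    exact hm𝒮.1 a (h₀ a) b (hh₀ a ⟨b, hq⟩) hq
  by_cases hall : ∀ a : lam.out, ∃ c, (a, c) ∈ m
  · -- `m` is total: `h₀` defeats `S`, contradicting winning
    obtain ⟨α, hα⟩ := hS h₀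
    exact hm𝒮.2 α (hall α) h₀ hext hα
  · -- `m` is not total: extend it, contradicting maximality
    push_neg at hall
    obtain ⟨β₀, hβ₀⟩ := hall
    -- override hats in the domain of `m` by `h₀`
    set T : (lam.out → κ.out) → (lam.out → κ.out) :=
      fun g β => if ∃ c, (β, c) ∈ m then h₀ β else g β with hT
    -- the modified strategy
    set S' : HatStrategy lam.out κ.out γ :=
      { guess := fun α g => if ∃ c, (α, c) ∈ m then {g β₀} else S.guess α (T g)
        small := by
          intro a g
          by_cases hd : ∃ c, (a, c) ∈ m
          · simp only [if_pos hd, Cardinal.mk_fintype]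
            simpa using lt_of_lt_of_le one_lt_two hγ
          · simp only [if_neg hd]
            exact S.small a (T g)
        continuous := by
          intro a g
          by_cases hd : ∃ c, (a, c) ∈ m
          · refine ⟨{β₀}, fun g' hg' => ?_⟩
            simp only [if_pos hd]
            rw [hg' β₀ (Finset.mem_singleton_self β₀)]
          · obtain ⟨F, hF⟩ := S.continuous a (T g)
            refine ⟨F, fun g' hg' => ?_⟩
            simp only [if_neg hd]
            refine hF (T g') fun i hi => ?_
            by_cases hdi : ∃ c, (i, c) ∈ m
            · simp only [hT, if_pos hdi]
            · simp only [hT, if_neg hdi]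
              exact hg' i hi
        blind := by
          intro a g g' hgg'
          by_cases hd : ∃ c, (a, c) ∈ m
          · have hne : β₀ ≠ a := by
              rintro rfl
              obtain ⟨c, hc⟩ := hd
              exact hβ₀ c hc
            simp only [if_pos hd, hgg' β₀ hne]
          · simp only [if_neg hd]
            refine S.blind a (T g) (T g') fun b hb => ?_
            by_cases hdb : ∃ c, (b, c) ∈ m
            · simp only [hT, if_pos hdb]
            · simp only [hT, if_neg hdb]
              exact hgg' b hb } with hS'
    obtain ⟨Y', ⟨α₁, hα₁⟩, h', hprop⟩ := H S'
    -- there is a logician in `Y'` outside the domain of `m`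
    have hnew : ∃ α ∈ Y', ¬∃ c, (α, c) ∈ m := by
      by_contra hcon
      push_neg at hcon
      set g : lam.out → κ.out := fun β => if β ∈ Y' then h' β else h' α₁ with hg
      have hgext : ∀ y ∈ Y', g y = h' y := fun y hy => if_pos hy
      have h2 := (hprop α₁ hα₁).2 g hgext
      have hβ₀Y' : β₀ ∉ Y' := by
        intro h
        obtain ⟨cb, hcb⟩ := hcon β₀ h
        exact hβ₀ cb hcb
      have hgeq : S'.guess α₁ g = {h' α₁} := by
        show (if ∃ c, (α₁, c) ∈ m then {g β₀} else S.guess α₁ (T g)) = {h' α₁}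
        rw [if_pos (hcon α₁ hα₁)]
        simp only [hg, if_neg hβ₀Y']
      rw [hgeq] at h2
      exact h2 rfl
    obtain ⟨α₀, hα₀Y', hα₀m⟩ := hnew
    -- the extended partial colouring
    set m₁ : Set (lam.out × κ.out) :=
      m ∪ {q | q.1 ∈ Y' ∧ ¬(∃ c, (q.1, c) ∈ m) ∧ q.2 = h' q.1} with hm₁
    have hm₁𝒮 : m₁ ∈ 𝒮 := by
      constructor
      · rintro a b b' (hb | ⟨-, hbm, hbv⟩) (hb' | ⟨-, hbm', hbv'⟩)
        · exact hm𝒮.1 a b b' hb hb'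
        · exact absurd ⟨b, hb⟩ hbm'
        · exact absurd ⟨b', hb'⟩ hbm
        · exact hbv.trans hbv'.symm
      · rintro α ⟨cc, hcc | ⟨hccY, hccm, -⟩⟩ g hg
        · exact hm𝒮.2 α ⟨cc, hcc⟩ g fun q hq => hg q (Or.inl hq)
        · -- α ∈ Y' \ dom m
          have hgm : ∀ q ∈ m, g q.1 = q.2 := fun q hq => hg q (Or.inl hq)
          have hgnew : ∀ a, a ∈ Y' → ¬(∃ c, (a, c) ∈ m) → g a = h' a :=
            fun a ha ham => hg (a, h' a) (Or.inr ⟨ha, ham, rfl⟩)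
          set g₂ : lam.out → κ.out := fun β => if β ∈ Y' then h' β else g β with hg₂
          have h2 := (hprop α hccY).2 g₂ (fun y hy => if_pos hy)
          have hTeq : T g₂ = g := by
            funext β
            by_cases hdb : ∃ c, (β, c) ∈ m
            · simp only [hT, if_pos hdb]
              obtain ⟨cb, hcb⟩ := hdb
              rw [show h₀ β = cb from hext (β, cb) hcb,
                show g β = cb from hgm (β, cb) hcb]
            · simp only [hT, hg₂, if_neg hdb]
              by_cases hbY : β ∈ Y'
              · rw [if_pos hbY, hgnew β hbY hdb]
              · rw [if_neg hbY]
          have hguess : S'.guess α g₂ = S.guess α g := by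
            show (if ∃ c, (α, c) ∈ m then {g₂ β₀} else S.guess α (T g₂)) = S.guess α g
            rw [if_neg hccm, hTeq]
          rw [hguess] at h2
          rw [hgnew α hccY hccm]
          exact h2
    have hsub : m ⊆ m₁ := subset_union_left
    have hsub' : m₁ ⊆ m := hmax.2 hm₁𝒮 hsub
    exact hα₀m ⟨h' α₀, hsub' (Or.inr ⟨hα₀Y', hα₀m, rfl⟩)⟩
end

section
/- Let δ and γ be infinite cardinals and κ ≥ 1 a cardinal. If the (ω,κ,δ⁺)-hat game is winning (where δ⁺ is the cardinal successor of δ) and the (ω,δ,γ)-hat game is winning, then the (ω,κ,γ)-hat game is winning. -/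
open Cardinal Set

universe u v

/-! ### Auxiliary machinery for the proof of `stmt12`. -/

/-- Winning transports along a bijection of the set of logicians. -/
theorem HatWinning.congrPlayers {L L' : Type v} {C : Type u} {γ : Cardinal.{u}}
    (e : L ≃ L') (h : HatWinning L C γ) : HatWinning L' C γ := by
  classical
  obtain ⟨S, hS⟩ := h
  refine ⟨⟨fun a' h' => S.guess (e.symm a') (h' ∘ e), fun _ _ => S.small _ _, ?_, ?_⟩, ?_⟩
  · intro a' h'
    obtain ⟨F, hF⟩ := S.continuous (e.symm a') (h' ∘ e)
    exact ⟨F.image e, fun h'' hag =>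
      hF _ (fun i hi => hag (e i) (Finset.mem_image_of_mem e hi))⟩
  · intro a' h h' hyp
    exact S.blind _ _ _ (fun b hb =>
      hyp (e b) (fun hEq => hb (by rw [← hEq, Equiv.symm_apply_apply])))
  · intro h'
    obtain ⟨a, ha⟩ := hS (h' ∘ e)
    refine ⟨e a, ?_⟩
    show h' (e a) ∈ S.guess (e.symm (e a)) (h' ∘ e)
    rw [Equiv.symm_apply_apply]
    exact ha

/-- A canonical family of codings: for every subset `s` of `C` of cardinality at most `δ`,
an injection of `s` into `D` (where `δ ≤ #D`); junk elsewhere. -/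
noncomputable def mkCode (δ : Cardinal.{u}) {C D : Type u} [Nonempty D] (hD : δ ≤ #D) :
    (s : Set C) → s → D :=
  fun s => if h : #s ≤ δ then ⇑(Classical.choice (Cardinal.le_def s D |>.mp (h.trans hD)))
    else fun _ => Classical.arbitrary D

theorem mkCode_inj (δ : Cardinal.{u}) {C D : Type u} [Nonempty D] (hD : δ ≤ #D)
    {s : Set C} (hs : #s ≤ δ) : Function.Injective (mkCode δ hD s) := by
  unfold mkCode
  rw [dif_pos hs]
  exact (Classical.choice (Cardinal.le_def s D |>.mp (hs.trans hD))).injective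

section Composition

variable {C D : Type u} {β γ δ : Cardinal.{u}}
variable (S₁ : HatStrategy ℕ C β) (S₂ : HatStrategy ℕ D γ)
variable (P : ℕ × D ↪ D) (code : (s : Set C) → s → D)

/-- The least witness of the first strategy against a colouring. -/
noncomputable def wt (h₁ : S₁.IsWinning) (y : ℕ → C) : ℕ :=
  sInf {j | y j ∈ S₁.guess j y}

theorem wt_mem (h₁ : S₁.IsWinning) (y : ℕ → C) :
    y (wt S₁ h₁ y) ∈ S₁.guess (wt S₁ h₁ y) y :=
  Nat.sInf_mem (⟨(h₁ y).choose, (h₁ y).choose_spec⟩ :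
    ({j | y j ∈ S₁.guess j y} : Set ℕ).Nonempty)

theorem wt_min (h₁ : S₁.IsWinning) (y : ℕ → C) {j : ℕ} (hj : j < wt S₁ h₁ y) :
    y j ∉ S₁.guess j y :=
  fun hmem => (Nat.sInf_le (show j ∈ {j | y j ∈ S₁.guess j y} from hmem)).not_gt hj

/-- The code of a column: the pair of the least witness and the code of that witness's own
colour inside its guess set. -/
noncomputable def colCode (h₁ : S₁.IsWinning) (y : ℕ → C) : D :=
  P (wt S₁ h₁ y,
    code (S₁.guess (wt S₁ h₁ y) y) ⟨y (wt S₁ h₁ y), wt_mem S₁ h₁ y⟩)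

theorem code_congr' {s s' : Set C} {cs : s} {cs' : s'} (hss : s = s')
    (hval : (cs : C) = (cs' : C)) : code s cs = code s' cs' := by
  subst hss
  exact congrArg (code s) (Subtype.ext hval)

/-- `colCode` depends on only finitely many coordinates of the column. -/
theorem colCode_local (h₁ : S₁.IsWinning) (y : ℕ → C) :
    ∃ F : Finset ℕ, ∀ y' : ℕ → C, (∀ i ∈ F, y' i = y i) →
      colCode S₁ P code h₁ y' = colCode S₁ P code h₁ y := by
  classical
  choose Fj hFj using fun j => S₁.continuous j y
  refine ⟨Finset.range (wt S₁ h₁ y + 1) ∪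
    (Finset.range (wt S₁ h₁ y + 1)).biUnion Fj, ?_⟩
  intro y' hag
  have hval : ∀ j, j ≤ wt S₁ h₁ y → y' j = y j := fun j hj =>
    hag j (Finset.mem_union_left _ (Finset.mem_range.mpr (Nat.lt_succ_of_le hj)))
  have hg : ∀ j, j ≤ wt S₁ h₁ y → S₁.guess j y' = S₁.guess j y := fun j hj =>
    hFj j y' (fun i hi => hag i (Finset.mem_union_right _
      (Finset.mem_biUnion.mpr ⟨j, Finset.mem_range.mpr (Nat.lt_succ_of_le hj), hi⟩)))
  have hmem' : y' (wt S₁ h₁ y) ∈ S₁.guess (wt S₁ h₁ y) y' := by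
    rw [hval _ le_rfl, hg _ le_rfl]
    exact wt_mem S₁ h₁ y
  have hwt' : wt S₁ h₁ y' = wt S₁ h₁ y := by
    refine le_antisymm (Nat.sInf_le hmem') ?_
    by_contra hlt
    push_neg at hlt
    have hmem'' : y' (wt S₁ h₁ y') ∈ S₁.guess (wt S₁ h₁ y') y' := wt_mem S₁ h₁ y'
    rw [hval _ hlt.le, hg _ hlt.le] at hmem''
    exact wt_min S₁ h₁ y hlt hmem''
  have h2 : code (S₁.guess (wt S₁ h₁ y') y') ⟨y' (wt S₁ h₁ y'), wt_mem S₁ h₁ y'⟩ =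
      code (S₁.guess (wt S₁ h₁ y) y) ⟨y (wt S₁ h₁ y), wt_mem S₁ h₁ y⟩ := by
    refine code_congr' code ?_ ?_
    · rw [hwt']; exact hg _ le_rfl
    · show y' (wt S₁ h₁ y') = y (wt S₁ h₁ y)
      rw [hwt']; exact hval _ le_rfl
  show P (wt S₁ h₁ y', _) = P (wt S₁ h₁ y, _)
  exact congrArg P (by rw [Prod.mk.injEq]; exact ⟨hwt', h2⟩)

/-- The derived colouring on columns. -/
noncomputable def gcol (h₁ : S₁.IsWinning) (x : ℕ × ℕ → C) : ℕ → D :=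
  fun k => colCode S₁ P code h₁ (fun j => x (k, j))

/-- Decoding: the candidate colours consistent with a set of guessed codes. -/
def decSet (j : ℕ) (s : Set C) (Q : Set D) : Set C :=
  {c | ∃ hm : c ∈ s, P (j, code s ⟨c, hm⟩) ∈ Q}

theorem decSet_small (hP : Function.Injective P) {s : Set C}
    (hcs : Function.Injective (code s)) {j : ℕ} {Q : Set D} :
    #(decSet P code j s Q) ≤ #Q := by
  refine Cardinal.mk_le_of_injective
    (f := fun c : decSet P code j s Q =>
      (⟨P (j, code s ⟨c.1, c.2.choose⟩), c.2.choose_spec⟩ : Q)) ?_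
  intro a b hab
  have h1 : P (j, code s ⟨a.1, a.2.choose⟩) = P (j, code s ⟨b.1, b.2.choose⟩) :=
    congrArg Subtype.val hab
  have h2 := hP h1
  rw [Prod.mk.injEq] at h2
  have h3 := hcs h2.2
  have h4 : (a : C) = (b : C) := by injection h3
  exact Subtype.ext h4

/-- The composed strategy on logicians `ℕ × ℕ`. -/
noncomputable def comp (hsm : ∀ (j : ℕ) (y : ℕ → C), #(S₁.guess j y) ≤ δ)
    (hcode : ∀ s : Set C, #s ≤ δ → Function.Injective (code s))
    (h₁ : S₁.IsWinning) : HatStrategy (ℕ × ℕ) C γ where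
  guess := fun p x => decSet P code p.2 (S₁.guess p.2 (fun j => x (p.1, j)))
    (S₂.guess p.1 (gcol S₁ P code h₁ x))
  small := by
    intro p x
    exact lt_of_le_of_lt
      (decSet_small P code P.injective (hcode _ (hsm _ _)))
      (S₂.small p.1 (gcol S₁ P code h₁ x))
  continuous := by
    classical
    intro p x
    obtain ⟨F₁, hF₁⟩ := S₁.continuous p.2 (fun j => x (p.1, j))
    obtain ⟨R, hR⟩ := S₂.continuous p.1 (gcol S₁ P code h₁ x)
    choose Fc hFc using fun k : ℕ => colCode_local S₁ P code h₁ (fun j => x (k, j))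
    refine ⟨F₁.image (fun i => (p.1, i)) ∪
      R.biUnion (fun k => (Fc k).image (fun i => (k, i))), ?_⟩
    intro x' hag
    have hs : S₁.guess p.2 (fun j => x' (p.1, j)) = S₁.guess p.2 (fun j => x (p.1, j)) :=
      hF₁ _ (fun i hi => hag _ (Finset.mem_union_left _ (Finset.mem_image_of_mem _ hi)))
    have hgc : ∀ k ∈ R, gcol S₁ P code h₁ x' k = gcol S₁ P code h₁ x k := fun k hk =>
      hFc k _ (fun i hi => hag _ (Finset.mem_union_right _
        (Finset.mem_biUnion.mpr ⟨k, hk, Finset.mem_image_of_mem _ hi⟩)))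
    have hQ : S₂.guess p.1 (gcol S₁ P code h₁ x') = S₂.guess p.1 (gcol S₁ P code h₁ x) :=
      hR _ hgc
    show decSet P code p.2 _ _ = decSet P code p.2 _ _
    rw [hs, hQ]
  blind := by
    intro p x x' hyp
    have hs : S₁.guess p.2 (fun j => x (p.1, j)) = S₁.guess p.2 (fun j => x' (p.1, j)) :=
      S₁.blind p.2 _ _ (fun b hb => hyp (p.1, b) (fun hEq => hb (congrArg Prod.snd hEq)))
    have hQ : S₂.guess p.1 (gcol S₁ P code h₁ x) = S₂.guess p.1 (gcol S₁ P code h₁ x') :=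
      S₂.blind p.1 _ _ (fun k hk => congrArg (colCode S₁ P code h₁)
        (funext fun j => hyp (k, j) (fun hEq => hk (congrArg Prod.fst hEq))))
    show decSet P code p.2 _ _ = decSet P code p.2 _ _
    rw [hs, hQ]

theorem comp_isWinning (hsm : ∀ (j : ℕ) (y : ℕ → C), #(S₁.guess j y) ≤ δ)
    (hcode : ∀ s : Set C, #s ≤ δ → Function.Injective (code s))
    (h₁ : S₁.IsWinning) (h₂ : S₂.IsWinning) :
    (comp S₁ S₂ P code hsm hcode h₁).IsWinning := by
  intro x
  obtain ⟨k, hk⟩ := h₂ (gcol S₁ P code h₁ x)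
  refine ⟨(k, wt S₁ h₁ (fun j => x (k, j))), ?_⟩
  exact ⟨wt_mem S₁ h₁ (fun j => x (k, j)), hk⟩

end Composition

/-- If the `(ω,κ,δ⁺)`-hat game and the `(ω,δ,γ)`-hat game are winning (with `δ`, `γ` infinite and
`κ ≥ 1`), then so is the `(ω,κ,γ)`-hat game. -/
theorem stmt12 (δ γ κ : Cardinal.{u}) (hδ : ℵ₀ ≤ δ) (hγ : ℵ₀ ≤ γ) (hκ : 1 ≤ κ) :
    HatWinning ℕ κ.out (Order.succ δ) → HatWinning ℕ δ.out γ → HatWinning ℕ κ.out γ := by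
  rintro ⟨S₁, h₁⟩ ⟨S₂, h₂⟩
  classical
  haveI : Infinite δ.out := Cardinal.infinite_iff.mpr (by rw [Cardinal.mk_out]; exact hδ)
  -- a pairing injection `ℕ × δ.out ↪ δ.out`
  have hDD : #(δ.out × δ.out) ≤ #(δ.out) := by
    rw [Cardinal.mk_prod]
    simp only [Cardinal.lift_id]
    exact (Cardinal.mul_eq_self (by rw [Cardinal.mk_out]; exact hδ)).le
  obtain ⟨e₃⟩ := Cardinal.le_def _ _ |>.mp hDD
  let P : ℕ × δ.out ↪ δ.out :=
    ((Infinite.natEmbedding δ.out).prodMap (Function.Embedding.refl δ.out)).trans e₃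
  -- the coding of small subsets of `κ.out` by elements of `δ.out`
  have hD : δ ≤ #(δ.out) := (Cardinal.mk_out δ).ge
  let code : (s : Set κ.out) → s → δ.out := mkCode δ hD
  have hcode : ∀ s : Set κ.out, #s ≤ δ → Function.Injective (code s) :=
    fun s hs => mkCode_inj δ hD hs
  have hsm : ∀ (j : ℕ) (y : ℕ → κ.out), #(S₁.guess j y) ≤ δ :=
    fun j y => Order.lt_succ_iff.mp (S₁.small j y)
  have W : HatWinning (ℕ × ℕ) κ.out γ :=
    ⟨comp S₁ S₂ P code hsm hcode h₁, comp_isWinning S₁ S₂ P code hsm hcode h₁ h₂⟩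
  exact W.congrPlayers (Denumerable.eqv (ℕ × ℕ))
end

section
/- Let κ and γ be infinite cardinals. If κ has the γ-FInA, then κ has the γ⁺-FInA, where γ⁺ denotes the cardinal successor of γ. -/
open Cardinal Set

universe u v

/-- `A` is forwards `F`-independent: no `α ∈ A` lies in a value of a function of the countable
family `F` applied to arguments from `A` that are all larger than `α`. -/
def ForwardsIndep {O : Type u} [LT O] (F : ℕ → Σ n : ℕ, (Fin n → O) → Set O)
    (A : Set O) : Prop :=
  ∀ α ∈ A, ∀ i : ℕ, ∀ x : Fin (F i).1 → O, (∀ j, x j ∈ A ∧ α < x j) → α ∉ (F i).2 x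

/-- `κ` has the `γ`-FInA: for every countable family of finitary functions
`f : κ^n → [κ]^{<γ}` there is a countably infinite forwards independent subset of `κ`. -/
def FInA (κ γ : Cardinal.{u}) : Prop :=
  ∀ F : ℕ → Σ n : ℕ, (Fin n → HatColour κ) → Set (HatColour κ),
    (∀ i x, #((F i).2 x) < γ) →
    ∃ A : Set (HatColour κ), A.Countable ∧ A.Infinite ∧ ForwardsIndep F A

lemma my_finite_of_antitone {O T : Type*} [LinearOrder O] [LinearOrder T]
    [WellFoundedLT O] [WellFoundedLT T] (S : Set O) (ρ : O → T)
    (h : ∀ a ∈ S, ∀ b ∈ S, a < b → ρ b < ρ a) : S.Finite := by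
  by_contra hfin
  have hinf : S.Infinite := hfin
  have wfT : WellFounded ((· < ·) : T → T → Prop) := IsWellFounded.wf
  have wfO : WellFounded ((· < ·) : O → O → Prop) := IsWellFounded.wf
  have sel : ∀ B : {B : Set O // B.Infinite ∧ B ⊆ S}, ∃ a, a ∈ B.1 ∧ ∀ b ∈ B.1, b ≤ a := by
    rintro ⟨B, hBinf, hBS⟩
    have hne : (ρ '' B).Nonempty := hBinf.nonempty.image ρ
    have hm := wfT.min_mem (ρ '' B) hne
    obtain ⟨a, haB, ha⟩ := hm
    refine ⟨a, haB, fun b hb => ?_⟩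
    by_contra hab
    have hlt : ρ b < ρ a := h a (hBS haB) b (hBS hb) (not_le.mp hab)
    rw [ha] at hlt
    exact wfT.not_lt_min (ρ '' B) (Set.mem_image_of_mem ρ hb) hlt
  choose f hf1 hf2 using sel
  let step : {B : Set O // B.Infinite ∧ B ⊆ S} → {B : Set O // B.Infinite ∧ B ⊆ S} :=
    fun B => ⟨B.1 \ {f B}, B.2.1.diff (Set.finite_singleton _), Set.diff_subset.trans B.2.2⟩
  let seq : ℕ → {B : Set O // B.Infinite ∧ B ⊆ S} := fun n => step^[n] ⟨S, hinf, subset_rfl⟩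
  have hstep : ∀ n, seq (n + 1) = step (seq n) := fun n =>
    Function.iterate_succ_apply' step n _
  set a : ℕ → O := fun n => f (seq n) with ha
  have hdec : ∀ n, a (n + 1) < a n := by
    intro n
    have hmem : a (n + 1) ∈ (seq (n + 1)).1 := hf1 _
    rw [hstep n] at hmem
    obtain ⟨hmem', hne'⟩ := hmem
    exact lt_of_le_of_ne (hf2 (seq n) _ hmem') (by simpa using hne')
  have hne : (Set.range a).Nonempty := ⟨a 0, ⟨0, rfl⟩⟩
  obtain ⟨k, hk⟩ := wfO.min_mem (Set.range a) hne
  exact wfO.not_lt_min (Set.range a) ⟨k + 1, rfl⟩ (hk ▸ hdec k)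

lemma my_mk_cond_le {O T : Type u} [Preorder T] (P : Set O) (Q : O → Prop) (R : O → T) (c : T)
    (hinj : ∀ z ∈ P, ∀ w ∈ P, R z = R w → z = w) :
    #({z | z ∈ P ∧ Q z ∧ R z ≤ c} : Set O) ≤ #(Set.Iic c) := by
  refine Cardinal.mk_le_of_injective
    (f := fun z : {z | z ∈ P ∧ Q z ∧ R z ≤ c} => (⟨R z.1, z.2.2.2⟩ : Set.Iic c)) ?_
  rintro ⟨z, hz⟩ ⟨w, hw⟩ hzw
  have hRz : R z = R w := congrArg Subtype.val hzw
  exact Subtype.ext (hinj z hz.1 w hw.1 hRz)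

/-- For infinite `κ` and `γ`: if `κ` has the `γ`-FInA then `κ` has the `γ⁺`-FInA. -/
theorem stmt15 (κ γ : Cardinal.{u}) (hκ : ℵ₀ ≤ κ) (hγ : ℵ₀ ≤ γ) :
    FInA κ γ → FInA κ (Order.succ γ) := by
  intro hF F hFsmall
  classical
  have hle : ∀ i (x : Fin (F i).1 → HatColour κ), #((F i).2 x) ≤ γ := by
    intro i x
    have h := hFsmall i x
    rwa [Order.lt_succ_iff] at h
  have hT : #(HatColour γ) = γ := Cardinal.mk_ord_toType γ
  have hTne : Nonempty (HatColour γ) := by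
    rw [← Cardinal.mk_ne_zero_iff (α := HatColour γ)] at *
    rw [hT]
    exact ne_of_gt (Cardinal.aleph0_pos.trans_le hγ)
  obtain ⟨t0⟩ := hTne
  have hembex : ∀ i (x : Fin (F i).1 → HatColour κ),
      ∃ e : ((F i).2 x) → HatColour γ, Function.Injective e := by
    intro i x
    have h1 : #((F i).2 x) ≤ #(HatColour γ) := by rw [hT]; exact hle i x
    obtain ⟨e⟩ := (Cardinal.le_def _ _).mp h1
    exact ⟨e, e.injective⟩
  choose emb hembinj using hembex
  let Rk : ∀ i : ℕ, (Fin (F i).1 → HatColour κ) → HatColour κ → HatColour γ :=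
    fun i x z => if h : z ∈ (F i).2 x then emb i x ⟨z, h⟩ else t0
  have hRkinj : ∀ i x z w, z ∈ (F i).2 x → w ∈ (F i).2 x → Rk i x z = Rk i x w → z = w := by
    intro i x z w hz hw h
    have e1 : Rk i x z = emb i x ⟨z, hz⟩ := dif_pos hz
    have e2 : Rk i x w = emb i x ⟨w, hw⟩ := dif_pos hw
    rw [e1, e2] at h
    exact congrArg Subtype.val (hembinj i x h)
  have hIic : ∀ c : HatColour γ, #(Set.Iic c) < γ := by
    intro c
    have h1 : #(Set.Iio c) < γ := Cardinal.mk_Iio_ord_toType c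
    have h2 : #(Set.Iic c) ≤ #(Set.Iio c) + 1 := by
      rw [← Set.Iio_insert]; exact Cardinal.mk_insert_le
    exact h2.trans_lt (Cardinal.add_lt_of_lt hγ h1 (Cardinal.one_lt_aleph0.trans_le hγ))
  let G : ℕ → Σ n : ℕ, (Fin n → HatColour κ) → Set (HatColour κ) := fun k =>
    ⟨(F (Nat.unpair k).1).1 + (F (Nat.unpair k).2).1 + 1, fun v =>
      {z | z ∈ (F (Nat.unpair k).1).2 (fun j => v ⟨j.1, by have := j.isLt; omega⟩) ∧
        v ⟨(F (Nat.unpair k).1).1 + (F (Nat.unpair k).2).1, by omega⟩ ∈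
          (F (Nat.unpair k).2).2 (fun j => v ⟨(F (Nat.unpair k).1).1 + j.1, by have := j.isLt; omega⟩) ∧
        Rk (Nat.unpair k).1 (fun j => v ⟨j.1, by have := j.isLt; omega⟩) z ≤
          Rk (Nat.unpair k).2 (fun j => v ⟨(F (Nat.unpair k).1).1 + j.1, by have := j.isLt; omega⟩)
            (v ⟨(F (Nat.unpair k).1).1 + (F (Nat.unpair k).2).1, by omega⟩)}⟩
  have hGsmall : ∀ k (v : Fin (G k).1 → HatColour κ), #((G k).2 v) < γ := by
    intro k v
    have hGk : (G k).1 = (F (Nat.unpair k).1).1 + (F (Nat.unpair k).2).1 + 1 := rfl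
    refine lt_of_le_of_lt ?_ (hIic (Rk (Nat.unpair k).2
      (fun j => v ⟨(F (Nat.unpair k).1).1 + j.1, by have := j.isLt; omega⟩)
      (v ⟨(F (Nat.unpair k).1).1 + (F (Nat.unpair k).2).1, by omega⟩)))
    exact my_mk_cond_le ((F (Nat.unpair k).1).2 (fun j => v ⟨j.1, by have := j.isLt; omega⟩))
      (fun _ => v ⟨(F (Nat.unpair k).1).1 + (F (Nat.unpair k).2).1, by omega⟩ ∈
        (F (Nat.unpair k).2).2 (fun j => v ⟨(F (Nat.unpair k).1).1 + j.1, by have := j.isLt; omega⟩))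
      (Rk (Nat.unpair k).1 (fun j => v ⟨j.1, by have := j.isLt; omega⟩)) _
      (fun z hz w hw h => hRkinj _ _ z w hz hw h)
  obtain ⟨A, hAc, hAi, hAind⟩ := hF G hGsmall
  have keyAux : ∀ k : ℕ, ∀ α₁ α₂ : HatColour κ,
      ∀ x₁ : Fin (F (Nat.unpair k).1).1 → HatColour κ,
      ∀ x₂ : Fin (F (Nat.unpair k).2).1 → HatColour κ,
      α₁ ∈ A → α₂ ∈ A → α₁ < α₂ →
      (∀ j, x₁ j ∈ A ∧ α₁ < x₁ j) → (∀ j, x₂ j ∈ A ∧ α₂ < x₂ j) →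
      α₁ ∈ (F (Nat.unpair k).1).2 x₁ → α₂ ∈ (F (Nat.unpair k).2).2 x₂ →
      Rk (Nat.unpair k).2 x₂ α₂ < Rk (Nat.unpair k).1 x₁ α₁ := by
    intro k α₁ α₂ x₁ x₂ h1A h2A h12 hx1 hx2 hm1 hm2
    by_contra hnot
    have hle' : Rk (Nat.unpair k).1 x₁ α₁ ≤ Rk (Nat.unpair k).2 x₂ α₂ := not_lt.mp hnot
    let v : Fin ((F (Nat.unpair k).1).1 + (F (Nat.unpair k).2).1 + 1) → HatColour κ := fun m =>
      if h : m.1 < (F (Nat.unpair k).1).1 then x₁ ⟨m.1, h⟩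
      else if h2 : m.1 - (F (Nat.unpair k).1).1 < (F (Nat.unpair k).2).1 then
        x₂ ⟨m.1 - (F (Nat.unpair k).1).1, h2⟩
      else α₂
    have hv1 : ∀ j : Fin (F (Nat.unpair k).1).1,
        v ⟨j.1, by have := j.isLt; omega⟩ = x₁ j := by
      intro j
      show (if h : j.1 < (F (Nat.unpair k).1).1 then x₁ ⟨j.1, h⟩
        else if h2 : j.1 - (F (Nat.unpair k).1).1 < (F (Nat.unpair k).2).1 then
          x₂ ⟨j.1 - (F (Nat.unpair k).1).1, h2⟩
        else α₂) = x₁ j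
      rw [dif_pos j.isLt]
    have hv2 : ∀ j : Fin (F (Nat.unpair k).2).1,
        v ⟨(F (Nat.unpair k).1).1 + j.1, by have := j.isLt; omega⟩ = x₂ j := by
      intro j
      show (if h : (F (Nat.unpair k).1).1 + j.1 < (F (Nat.unpair k).1).1 then
          x₁ ⟨(F (Nat.unpair k).1).1 + j.1, h⟩
        else if h2 : (F (Nat.unpair k).1).1 + j.1 - (F (Nat.unpair k).1).1 < (F (Nat.unpair k).2).1
          then x₂ ⟨(F (Nat.unpair k).1).1 + j.1 - (F (Nat.unpair k).1).1, h2⟩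
        else α₂) = x₂ j
      rw [dif_neg (by omega), dif_pos (by have := j.isLt; omega)]
      exact congrArg x₂ (Fin.ext (by simp))
    have hv3 : v ⟨(F (Nat.unpair k).1).1 + (F (Nat.unpair k).2).1, by omega⟩ = α₂ := by
      show (if h : (F (Nat.unpair k).1).1 + (F (Nat.unpair k).2).1 < (F (Nat.unpair k).1).1 then
          x₁ ⟨(F (Nat.unpair k).1).1 + (F (Nat.unpair k).2).1, h⟩
        else if h2 : (F (Nat.unpair k).1).1 + (F (Nat.unpair k).2).1 - (F (Nat.unpair k).1).1
            < (F (Nat.unpair k).2).1 then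
          x₂ ⟨(F (Nat.unpair k).1).1 + (F (Nat.unpair k).2).1 - (F (Nat.unpair k).1).1, h2⟩
        else α₂) = α₂
      rw [dif_neg (by omega), dif_neg (by omega)]
    have hvA : ∀ m : Fin ((G k).1), v m ∈ A ∧ α₁ < v m := by
      intro m
      show (if h : m.1 < (F (Nat.unpair k).1).1 then x₁ ⟨m.1, h⟩
        else if h2 : m.1 - (F (Nat.unpair k).1).1 < (F (Nat.unpair k).2).1 then
          x₂ ⟨m.1 - (F (Nat.unpair k).1).1, h2⟩
        else α₂) ∈ A ∧ α₁ < (if h : m.1 < (F (Nat.unpair k).1).1 then x₁ ⟨m.1, h⟩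
        else if h2 : m.1 - (F (Nat.unpair k).1).1 < (F (Nat.unpair k).2).1 then
          x₂ ⟨m.1 - (F (Nat.unpair k).1).1, h2⟩
        else α₂)
      by_cases hc1 : m.1 < (F (Nat.unpair k).1).1
      · rw [dif_pos hc1]
        exact ⟨(hx1 _).1, (hx1 _).2⟩
      · rw [dif_neg hc1]
        by_cases hc2 : m.1 - (F (Nat.unpair k).1).1 < (F (Nat.unpair k).2).1
        · rw [dif_pos hc2]
          exact ⟨(hx2 _).1, h12.trans (hx2 _).2⟩
        · rw [dif_neg hc2]
          exact ⟨h2A, h12⟩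
    refine hAind α₁ h1A k v hvA ?_
    refine ⟨?_, ?_, ?_⟩
    · rw [show (fun j : Fin (F (Nat.unpair k).1).1 =>
        v ⟨j.1, by have := j.isLt; omega⟩) = x₁ from funext hv1]
      exact hm1
    · rw [show (fun j : Fin (F (Nat.unpair k).2).1 =>
        v ⟨(F (Nat.unpair k).1).1 + j.1, by have := j.isLt; omega⟩) = x₂ from funext hv2, hv3]
      exact hm2
    · rw [show (fun j : Fin (F (Nat.unpair k).1).1 =>
        v ⟨j.1, by have := j.isLt; omega⟩) = x₁ from funext hv1,
        show (fun j : Fin (F (Nat.unpair k).2).1 =>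
        v ⟨(F (Nat.unpair k).1).1 + j.1, by have := j.isLt; omega⟩) = x₂ from funext hv2, hv3]
      exact hle'
  have key : ∀ i₁ i₂ : ℕ, ∀ α₁ α₂ : HatColour κ,
      ∀ x₁ : Fin (F i₁).1 → HatColour κ, ∀ x₂ : Fin (F i₂).1 → HatColour κ,
      α₁ ∈ A → α₂ ∈ A → α₁ < α₂ →
      (∀ j, x₁ j ∈ A ∧ α₁ < x₁ j) → (∀ j, x₂ j ∈ A ∧ α₂ < x₂ j) →
      α₁ ∈ (F i₁).2 x₁ → α₂ ∈ (F i₂).2 x₂ →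
      Rk i₂ x₂ α₂ < Rk i₁ x₁ α₁ := by
    intro i₁ i₂
    have h := keyAux (Nat.pair i₁ i₂)
    rw [Nat.unpair_pair] at h
    exact h
  let Bad : Set (HatColour κ) := {α | α ∈ A ∧ ∃ i : ℕ, ∃ x : Fin (F i).1 → HatColour κ,
    (∀ j, x j ∈ A ∧ α < x j) ∧ α ∈ (F i).2 x}
  have hsel : ∀ α, α ∈ Bad → ∃ i : ℕ, ∃ x : Fin (F i).1 → HatColour κ,
      (∀ j, x j ∈ A ∧ α < x j) ∧ α ∈ (F i).2 x := fun α h => h.2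
  choose iB xB hxB hmB using hsel
  let ρ : HatColour κ → HatColour γ := fun α =>
    if h : α ∈ Bad then Rk (iB α h) (xB α h) α else t0
  have hBadFin : Bad.Finite := by
    refine my_finite_of_antitone Bad ρ ?_
    intro a ha b hb hab
    show (if h : b ∈ Bad then Rk (iB b h) (xB b h) b else t0) <
      (if h : a ∈ Bad then Rk (iB a h) (xB a h) a else t0)
    rw [dif_pos ha, dif_pos hb]
    exact key (iB a ha) (iB b hb) a b (xB a ha) (xB b hb) ha.1 hb.1 hab
      (hxB a ha) (hxB b hb) (hmB a ha) (hmB b hb)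
  refine ⟨A \ Bad, hAc.mono Set.diff_subset, hAi.diff hBadFin, ?_⟩
  intro α hα i x hx hmem
  exact hα.2 ⟨hα.1, i, x, fun j => ⟨(hx j).1.1, (hx j).2⟩, hmem⟩
end

section
/- Let κ and γ be infinite cardinals. Then κ has the γ-MInA if and only if the free subset property Fr_γ(κ,ω) holds. -/
open Cardinal Set

universe u v

/-- The free subset property `Fr_γ(κ, ω)`: for every family of at most `γ`-many finitary
functions `f : κ^n → κ` there is a countably infinite free subset of `κ`. -/
def FreeSubsetProp (κ γ : Cardinal.{u}) : Prop :=
  ∀ (ι : Type u) (F : ι → Σ n : ℕ, (Fin n → HatColour κ) → HatColour κ), #ι ≤ γ →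
    ∃ A : Set (HatColour κ), A.Countable ∧ A.Infinite ∧
      ∀ α ∈ A, ∀ i : ι, ∀ x : Fin (F i).1 → HatColour κ,
        (∀ j, x j ∈ A \ {α}) → α ≠ (F i).2 x

/-! ### Auxiliary machinery -/

noncomputable section Stmt17Aux

open scoped Classical

/-- Apply a finitary function to a tuple of a given length, if the lengths match. -/
def appAux {O : Type u} (g : Σ n : ℕ, (Fin n → O) → O) (m : ℕ) (y : Fin m → O) : Option O :=
  if h : g.1 = m then some (g.2 fun j => y (Fin.cast h j)) else none

theorem appAux_self {O : Type u} (g : Σ n : ℕ, (Fin n → O) → O) (y : Fin g.1 → O) :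
    appAux g g.1 y = some (g.2 y) := by
  show (if h : g.1 = g.1 then some (g.2 fun j => y (Fin.cast h j)) else none) = some (g.2 y)
  rw [dif_pos rfl]
  rfl

theorem appAux_eq_some {O : Type u} {g : Σ n : ℕ, (Fin n → O) → O} {m : ℕ} {y : Fin m → O}
    {v : O} (h : appAux g m y = some v) :
    ∃ he : g.1 = m, g.2 (fun j => y (Fin.cast he j)) = v := by
  by_cases he : g.1 = m
  · refine ⟨he, ?_⟩
    have : appAux g m y = some (g.2 fun j => y (Fin.cast he j)) := dif_pos he
    rw [this] at h
    exact Option.some.inj h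
  · have : appAux g m y = none := dif_neg he
    rw [this] at h
    exact absurd h (by simp)

/-- The set of indices `ξ` witnessing a "violation pattern": `G ξ` applied to `y` yields `β`,
with `β` not among the arguments. -/
def leastSetAux {O O' : Type u} (G : O' → Σ n : ℕ, (Fin n → O) → O) (m : ℕ)
    (y : Fin m → O) (β : O) : Set O' :=
  {ξ | appAux (G ξ) m y = some β ∧ β ∉ Set.range y}

/-- The value of the derived set-valued function: all values `G ξ` applied to `x`, for `ξ`
below the least index of a violation pattern with data `(β, y)`. -/
def gval {O O' : Type u} [Preorder O'] (G : O' → Σ n : ℕ, (Fin n → O) → O) (m n : ℕ)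
    (β : O) (y : Fin m → O) (x : Fin n → O) : Set O :=
  {v | ∃ ℓ : O', IsLeast (leastSetAux G m y β) ℓ ∧ ∃ ξ : O', ξ ≤ ℓ ∧ appAux (G ξ) n x = some v}

/-- The derived family of set-valued functions of arity `m + n + 1`. -/
def famAux {O O' : Type u} [Preorder O'] (G : O' → Σ n : ℕ, (Fin n → O) → O) (m n : ℕ) :
    Σ N : ℕ, (Fin N → O) → Set O :=
  ⟨m + n + 1, fun t => gval G m n (t 0) (fun j => t (Fin.castAdd n j).succ)
      (fun j => t (Fin.natAdd m j).succ)⟩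

theorem mk_Iic_lt {γ : Cardinal.{u}} (hγ : ℵ₀ ≤ γ) (a : HatColour γ) : #(Set.Iic a) < γ := by
  rw [← Set.Iio_insert]
  exact lt_of_le_of_lt Cardinal.mk_insert_le
    (Cardinal.add_lt_of_lt hγ (Cardinal.mk_Iio_ord_toType a)
      (lt_of_lt_of_le Cardinal.one_lt_aleph0 hγ))

theorem mk_gval_lt {γ : Cardinal.{u}} (hγ : ℵ₀ ≤ γ) {O : Type u}
    (G : HatColour γ → Σ n : ℕ, (Fin n → O) → O) (m n : ℕ) (β : O) (y : Fin m → O)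
    (x : Fin n → O) : #(gval G m n β y x) < γ := by
  by_cases hL : ∃ ℓ, IsLeast (leastSetAux G m y β) ℓ
  · obtain ⟨ℓ, hℓ⟩ := hL
    have hch : ∀ v : (gval G m n β y x), ∃ ξ : Set.Iic ℓ, appAux (G ξ.1) n x = some v.1 := by
      rintro ⟨v, ℓ', hℓ', ξ, hξℓ, happ⟩
      exact ⟨⟨ξ, (hℓ'.unique hℓ) ▸ hξℓ⟩, happ⟩
    choose f hf using hch
    have hinj : Function.Injective f := by
      intro v₁ v₂ hE
      have h12 : some v₁.1 = some v₂.1 := by rw [← hf v₁, ← hf v₂, hE]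
      exact Subtype.ext (Option.some.inj h12)
    exact lt_of_le_of_lt (Cardinal.mk_le_of_injective hinj) (mk_Iic_lt hγ ℓ)
  · have hempty : gval G m n β y x = ∅ := by
      ext v
      simp only [Set.mem_empty_iff_false, iff_false]
      rintro ⟨ℓ', hℓ', -⟩
      exact hL ⟨ℓ', hℓ'⟩
    rw [hempty, Cardinal.mk_emptyCollection]
    exact aleph0_pos.trans_le hγ

/-- Extend a `≤ γ`-indexed family of functions to a family indexed by `HatColour γ`,
padding with the (never violated) first-projection function. -/
def extendFam {O : Type u} {ι : Type u} {O' : Type u} (F : ι → Σ n : ℕ, (Fin n → O) → O)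
    (φ : ι ↪ O') : O' → Σ n : ℕ, (Fin n → O) → O :=
  fun ξ => if h : ∃ i, φ i = ξ then F h.choose else ⟨1, fun v => v 0⟩

theorem extendFam_apply {O : Type u} {ι : Type u} {O' : Type u}
    (F : ι → Σ n : ℕ, (Fin n → O) → O) (φ : ι ↪ O') (i : ι) :
    extendFam F φ (φ i) = F i := by
  have h : ∃ i', φ i' = φ i := ⟨i, rfl⟩
  show (if h : ∃ i', φ i' = φ i then F h.choose else ⟨1, fun v => v 0⟩) = F i
  rw [dif_pos h]
  exact congrArg F (φ.injective h.choose_spec)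

/-- Turn a countable family of set-valued functions into a `γ`-indexed family of
point-valued functions enumerating the (small) value sets. -/
def liftFam {O O' : Type u} (F : ℕ → Σ n : ℕ, (Fin n → O) → Set O)
    (emb : ∀ (i : ℕ) (x : Fin (F i).1 → O), ↥((F i).2 x) ↪ O') (o0 : O) :
    ULift.{u} ℕ × O' → Σ n : ℕ, (Fin n → O) → O :=
  fun p => ⟨(F p.1.down).1, fun x =>
    if h : ∃ s : ↥((F p.1.down).2 x), emb p.1.down x s = p.2 then (h.choose : O) else o0⟩

theorem liftFam_eval {O O' : Type u} (F : ℕ → Σ n : ℕ, (Fin n → O) → Set O)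
    (emb : ∀ (i : ℕ) (x : Fin (F i).1 → O), ↥((F i).2 x) ↪ O') (o0 : O) (i : ℕ)
    (x : Fin (F i).1 → O) (α : O) (hmem : α ∈ (F i).2 x) :
    (liftFam F emb o0 ⟨ULift.up i, emb i x ⟨α, hmem⟩⟩).2 x = α := by
  have h : ∃ s : ↥((F i).2 x), emb i x s = emb i x ⟨α, hmem⟩ := ⟨⟨α, hmem⟩, rfl⟩
  show (if h : ∃ s : ↥((F i).2 x), emb i x s = emb i x ⟨α, hmem⟩ then (h.choose : O) else o0) = α
  rw [dif_pos h]
  exact congrArg Subtype.val ((emb i x).injective h.choose_spec)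

end Stmt17Aux

/-- For infinite `κ` and `γ`: `κ` has the `γ`-MInA iff the free subset property `Fr_γ(κ,ω)`
holds. -/
theorem stmt17 (κ γ : Cardinal.{u}) (hκ : ℵ₀ ≤ κ) (hγ : ℵ₀ ≤ γ) :
    MInA κ γ ↔ FreeSubsetProp κ γ := by
  classical
  have hO : Nonempty (HatColour κ) := by
    rw [Ordinal.toType_nonempty_iff_ne_zero, ne_eq, Cardinal.ord_eq_zero]
    exact (aleph0_pos.trans_le hκ).ne'
  constructor
  · -- MInA → FreeSubsetProp
    intro h ι F hι
    obtain ⟨φ⟩ : Nonempty (ι ↪ HatColour γ) := by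
      rw [← Cardinal.le_def, Cardinal.mk_ord_toType]
      exact hι
    set F' := extendFam F φ with hF'def
    set e : ℕ ≃ ℕ × ℕ := (Denumerable.eqv (ℕ × ℕ)).symm with he
    obtain ⟨A, hcnt, hinf, hind⟩ := h (fun k => famAux F' (e k).1 (e k).2) (by
      intro k x
      exact mk_gval_lt hγ F' (e k).1 (e k).2 _ _ _)
    have transfer : ∀ B : Set (HatColour κ),
        (∀ α ∈ B, ∀ ξ : HatColour γ, ∀ x : Fin (F' ξ).1 → HatColour κ,
          (∀ j, x j ∈ B \ {α}) → α ≠ (F' ξ).2 x) →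
        ∀ α ∈ B, ∀ i : ι, ∀ x : Fin (F i).1 → HatColour κ,
          (∀ j, x j ∈ B \ {α}) → α ≠ (F i).2 x := by
      intro B hB α hα i
      have h1 := hB α hα (φ i)
      rw [hF'def, extendFam_apply F φ i] at h1
      exact h1
    by_cases hfree : ∀ α ∈ A, ∀ ξ : HatColour γ, ∀ x : Fin (F' ξ).1 → HatColour κ,
        (∀ j, x j ∈ A \ {α}) → α ≠ (F' ξ).2 x
    · exact ⟨A, hcnt, hinf, transfer A hfree⟩
    · push_neg at hfree
      obtain ⟨α', hα'A, η', x', hx', heq'⟩ := hfree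
      obtain ⟨η, hηV, hηmin⟩ := (wellFounded_lt (α := HatColour γ)).has_min
        {ξ : HatColour γ | ∃ α ∈ A, ∃ x : Fin (F' ξ).1 → HatColour κ,
          (∀ j, x j ∈ A \ {α}) ∧ (F' ξ).2 x = α}
        ⟨η', α', hα'A, x', hx', heq'.symm⟩
      obtain ⟨α₀, hα₀A, x₀, hx₀, hx₀eq⟩ := hηV
      refine ⟨A \ {α₀}, hcnt.mono Set.diff_subset,
        hinf.diff (Set.finite_singleton α₀), transfer _ ?_⟩
      intro β hβ ξ x hx hcon
      have hβA : β ∈ A := hβ.1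
      have hβnr : β ∉ Set.range x := by
        rintro ⟨j, rfl⟩
        exact (hx j).2 rfl
      have hξmem : ξ ∈ leastSetAux F' (F' ξ).1 x β :=
        ⟨by rw [appAux_self]; exact congrArg some hcon.symm, hβnr⟩
      obtain ⟨ℓ, hℓmem, hℓmin⟩ := (wellFounded_lt (α := HatColour γ)).has_min
        (leastSetAux F' (F' ξ).1 x β) ⟨ξ, hξmem⟩
      have hIsLeast : IsLeast (leastSetAux F' (F' ξ).1 x β) ℓ :=
        ⟨hℓmem, fun z hz => not_lt.1 (hℓmin z hz)⟩
      have hηℓ : η ≤ ℓ := by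
        obtain ⟨happ, hnr⟩ := hℓmem
        obtain ⟨hcast, hval⟩ := appAux_eq_some happ
        refine not_lt.1 (hηmin ℓ ⟨β, hβA, fun j => x (Fin.cast hcast j), ?_, hval⟩)
        intro j
        exact ⟨(hx (Fin.cast hcast j)).1.1, (hx (Fin.cast hcast j)).2⟩
      -- build the argument tuple and contradict mutual independence
      have hind' := hind α₀ hα₀A (e.symm ((F' ξ).1, (F' η).1))
      have hk : e (e.symm ((F' ξ).1, (F' η).1)) = ((F' ξ).1, (F' η).1) :=
        e.apply_symm_apply _
      beta_reduce at hind'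
      rw [hk] at hind'
      set t : Fin ((F' ξ).1 + (F' η).1 + 1) → HatColour κ :=
        Fin.cons β (Fin.append x x₀) with htdef
      have ht : ∀ j, t j ∈ A \ {α₀} := by
        intro j
        refine Fin.cases ?_ ?_ j
        · rw [htdef, Fin.cons_zero]
          exact hβ
        · intro c
          rw [htdef, Fin.cons_succ]
          refine Fin.addCases (motive := fun c => Fin.append x x₀ c ∈ A \ {α₀}) ?_ ?_ c
          · intro jj
            rw [Fin.append_left]
            exact (hx jj).1
          · intro jj
            rw [Fin.append_right]
            exact hx₀ jj
      have ht0 : t 0 = β := by rw [htdef, Fin.cons_zero]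
      have hty : (fun j : Fin (F' ξ).1 => t (Fin.castAdd (F' η).1 j).succ) = x := by
        funext j
        rw [htdef, Fin.cons_succ, Fin.append_left]
      have htx : (fun j : Fin (F' η).1 => t (Fin.natAdd (F' ξ).1 j).succ) = x₀ := by
        funext j
        rw [htdef, Fin.cons_succ, Fin.append_right]
      have hmem : α₀ ∈ gval F' (F' ξ).1 (F' η).1 (t 0)
          (fun j : Fin (F' ξ).1 => t (Fin.castAdd (F' η).1 j).succ)
          (fun j : Fin (F' η).1 => t (Fin.natAdd (F' ξ).1 j).succ) := by
        rw [ht0, hty, htx]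
        exact ⟨ℓ, hIsLeast, η, hηℓ, by rw [appAux_self]; exact congrArg some hx₀eq⟩
      exact hind' t ht hmem
  · -- FreeSubsetProp → MInA
    intro h F hFlt
    obtain ⟨o0⟩ := hO
    have hemb : ∀ (i : ℕ) (x : Fin (F i).1 → HatColour κ),
        Nonempty (↥((F i).2 x) ↪ HatColour γ) := by
      intro i x
      rw [← Cardinal.le_def, Cardinal.mk_ord_toType]
      exact (hFlt i x).le
    obtain ⟨A, hcnt, hinf, hfree⟩ := h (ULift.{u} ℕ × HatColour γ)
      (liftFam F (fun i x => (hemb i x).some) o0) (by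
        calc #(ULift.{u} ℕ × HatColour γ) = #(ULift.{u} ℕ) * #(HatColour γ) := by
              rw [Cardinal.mk_prod, Cardinal.lift_id, Cardinal.lift_id]
          _ = ℵ₀ * γ := by
              rw [Cardinal.mk_uLift, Cardinal.mk_nat, Cardinal.lift_aleph0,
                Cardinal.mk_ord_toType]
          _ = γ := by rw [Cardinal.mul_eq_max le_rfl hγ, max_eq_right hγ]
          _ ≤ γ := le_rfl)
    refine ⟨A, hcnt, hinf, ?_⟩
    intro α hα i x hx hmemF
    have hne := hfree α hα ⟨ULift.up i, (hemb i x).some ⟨α, hmemF⟩⟩ x hx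
    exact hne (liftFam_eval F (fun i x => (hemb i x).some) o0 i x α hmemF).symm
end
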